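/- arXiv:2009.04138 — 4 statements merged into one kernel-verified Lean document; each statement's English description precedes it below -/
import Mathlib

section
/- Let μ₀, μ₁ be absolutely continuous probability measures on ℝ with finite second moments. Then the L¹ (cost |x−y|) optimal transport cost equals ∫₀¹ |F₀^{[-1]}(s) − F₁^{[-1]}(s)| ds = ∫_ℝ |F₀(x) − F₁(x)| dx. -/
open MeasureTheory Set

/-- The quantile function `F^{[-1]}(s) = inf {t | F t ≥ s}` of a probability measure on ℝ. -/
noncomputable def quantile (μ : Measure ℝ) (s : ℝ) : ℝ :=
  sInf {t : ℝ | s ≤ (μ (Iic t)).toReal}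

/-- The optimal transport cost for the cost `|x - y|` as an infimum over couplings. -/
noncomputable def W1 (μ ν : Measure ℝ) : ENNReal :=
  sInf {c | ∃ γ : Measure (ℝ × ℝ), γ.map Prod.fst = μ ∧ γ.map Prod.snd = ν ∧
    c = ∫⁻ p, ENNReal.ofReal |p.1 - p.2| ∂γ}

open ProbabilityTheory Filter
open scoped ENNReal

section aux
variable (μ : Measure ℝ) [IsProbabilityMeasure μ]

lemma quantile_eq (s : ℝ) : quantile μ s = sInf {t : ℝ | s ≤ cdf μ t} := by
  simp only [quantile, cdf_eq_real, measureReal_def]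

lemma quantile_le_iff {s : ℝ} (hs0 : 0 < s) (hs1 : s < 1) (t : ℝ) :
    quantile μ s ≤ t ↔ s ≤ cdf μ t := by
  rw [quantile_eq]
  set S : Set ℝ := {t : ℝ | s ≤ cdf μ t} with hS
  obtain ⟨u₀, hu₀⟩ : ∃ u, cdf μ u < s := (Tendsto.eventually_lt_const hs0 (tendsto_cdf_atBot μ)).exists
  have hbdd : BddBelow S := by
    refine ⟨u₀, fun u hu => ?_⟩
    by_contra h
    push_neg at h
    exact absurd (le_trans hu ((monotone_cdf μ) h.le)) (not_le.2 hu₀)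
  obtain ⟨u₁, hu₁⟩ : ∃ u, s ≤ cdf μ u := (Tendsto.eventually_const_le hs1 (tendsto_cdf_atTop μ)).exists
  have hne : S.Nonempty := ⟨u₁, hu₁⟩
  constructor
  · intro h
    have key : ∀ u, t < u → s ≤ cdf μ u := by
      intro u hu
      obtain ⟨v, hvS, hv⟩ := exists_lt_of_csInf_lt hne (lt_of_le_of_lt h hu)
      exact le_trans hvS ((monotone_cdf μ) hv.le)
    have htend : Tendsto (cdf μ) (nhdsWithin t (Ioi t)) (nhds (cdf μ t)) :=
      ((cdf μ).right_continuous t).tendsto.mono_left (nhdsWithin_mono t Ioi_subset_Ici_self)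
    exact ge_of_tendsto htend (eventually_nhdsWithin_of_forall fun u hu => key u hu)
  · intro h
    exact csInf_le hbdd h

lemma lt_quantile_iff {s : ℝ} (hs0 : 0 < s) (hs1 : s < 1) (t : ℝ) :
    t < quantile μ s ↔ cdf μ t < s := by
  rw [← not_le, ← not_le, quantile_le_iff μ hs0 hs1]

lemma monotoneOn_quantile : MonotoneOn (quantile μ) (Ioo (0:ℝ) 1) := by
  intro a ha b hb hab
  rw [quantile_le_iff μ ha.1 ha.2]
  exact le_trans hab ((quantile_le_iff μ hb.1 hb.2 (quantile μ b)).1 le_rfl)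

lemma aemeasurable_quantile : AEMeasurable (quantile μ) (volume.restrict (Ioo (0:ℝ) 1)) :=
  aemeasurable_restrict_of_monotoneOn measurableSet_Ioo (monotoneOn_quantile μ)

end aux

-- volume of Ioo 0 1 ∩ Ioc a b for 0 ≤ a ≤ b ≤ 1
lemma vol_Ioo_inter_Ioc {a b : ℝ} (ha : 0 ≤ a) (hab : a ≤ b) (hb : b ≤ 1) :
    volume (Ioo (0:ℝ) 1 ∩ Ioc a b) = ENNReal.ofReal (b - a) := by
  rcases eq_or_lt_of_le hb with hb1 | hb1
  · have : Ioo (0:ℝ) 1 ∩ Ioc a b = Ioo a 1 := by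
      subst hb1
      ext x
      simp only [mem_inter_iff, mem_Ioo, mem_Ioc]
      constructor
      · rintro ⟨⟨_, h1⟩, h2, _⟩; exact ⟨h2, h1⟩
      · rintro ⟨h1, h2⟩; exact ⟨⟨lt_of_le_of_lt ha h1, h2⟩, h1, h2.le⟩
    rw [this, Real.volume_Ioo, hb1]
  · have : Ioo (0:ℝ) 1 ∩ Ioc a b = Ioc a b := by
      ext x
      simp only [mem_inter_iff, mem_Ioo, mem_Ioc]
      constructor
      · rintro ⟨_, h⟩; exact h
      · rintro ⟨h1, h2⟩; exact ⟨⟨lt_of_le_of_lt ha h1, lt_of_le_of_lt h2 hb1⟩, h1, h2⟩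
    rw [this, Real.volume_Ioc]

section push
variable (μ : Measure ℝ) [IsProbabilityMeasure μ]

lemma quantile_sublevel (t : ℝ) :
    Ioo (0:ℝ) 1 ∩ quantile μ ⁻¹' Iic t = Ioo (0:ℝ) 1 ∩ Ioc 0 (cdf μ t) := by
  ext s
  simp only [mem_inter_iff, mem_preimage, mem_Iic, mem_Ioo, mem_Ioc]
  constructor
  · rintro ⟨hs, h⟩
    exact ⟨hs, hs.1, (quantile_le_iff μ hs.1 hs.2 t).1 h⟩
  · rintro ⟨hs, _, h⟩
    exact ⟨hs, (quantile_le_iff μ hs.1 hs.2 t).2 h⟩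

lemma vol_quantile_sublevel (t : ℝ) :
    volume (Ioo (0:ℝ) 1 ∩ quantile μ ⁻¹' Iic t) = μ (Iic t) := by
  rw [quantile_sublevel, vol_Ioo_inter_Ioc le_rfl (cdf_nonneg μ t) (cdf_le_one μ t),
    sub_zero, ofReal_cdf]

lemma map_quantile : (volume.restrict (Ioo (0:ℝ) 1)).map (quantile μ) = μ := by
  have h1 : IsProbabilityMeasure ((volume.restrict (Ioo (0:ℝ) 1)).map (quantile μ)) := by
    constructor
    rw [Measure.map_apply_of_aemeasurable (aemeasurable_quantile μ) MeasurableSet.univ]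
    simp [Real.volume_Ioo]
  refine Measure.ext_of_Iic _ _ (fun t => ?_)
  rw [Measure.map_apply_of_aemeasurable (aemeasurable_quantile μ) measurableSet_Iic,
    Measure.restrict_apply' measurableSet_Ioo, Set.inter_comm, vol_quantile_sublevel]

end push

/-- points `x` with `a ≤ x` XOR `b ≤ x` -/
def Dset (a b : ℝ) : Set ℝ := {x | (a ≤ x ∧ ¬ b ≤ x) ∨ (b ≤ x ∧ ¬ a ≤ x)}

lemma Dset_eq (a b : ℝ) : Dset a b = Ico (min a b) (max a b) := by
  rcases le_total a b with h | h <;>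
  · ext x
    simp only [Dset, mem_setOf_eq, mem_Ico, min_def, max_def, not_le]
    constructor
    · rintro (⟨h1, h2⟩ | ⟨h1, h2⟩) <;> split_ifs <;> constructor <;> linarith
    · intro hx
      split_ifs at hx
      all_goals first
        | (left; exact ⟨hx.1, hx.2⟩)
        | (right; exact ⟨hx.1, hx.2⟩)
        | (left; constructor <;> linarith)
        | (right; constructor <;> linarith)

lemma measurableSet_Dset (a b : ℝ) : MeasurableSet (Dset a b) := by
  rw [Dset_eq]; exact measurableSet_Ico

lemma volume_Dset (a b : ℝ) : volume (Dset a b) = ENNReal.ofReal |a - b| := by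
  rw [Dset_eq, Real.volume_Ico, max_sub_min_eq_abs, abs_sub_comm]

lemma ofReal_abs_eq_lintegral (a b : ℝ) :
    ENNReal.ofReal |a - b| = ∫⁻ t, (Dset a b).indicator 1 t := by
  rw [lintegral_indicator_one (measurableSet_Dset a b), volume_Dset]

/-- points `x` with `x ≤ a` XOR `x ≤ b` -/
def Eset (a b : ℝ) : Set ℝ := {x | (x ≤ a ∧ ¬ x ≤ b) ∨ (x ≤ b ∧ ¬ x ≤ a)}

lemma Eset_eq (a b : ℝ) : Eset a b = Ioc (min a b) (max a b) := by
  rcases le_total a b with h | h <;>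
  · ext x
    simp only [Eset, mem_setOf_eq, mem_Ioc, min_def, max_def, not_le]
    constructor
    · rintro (⟨h1, h2⟩ | ⟨h1, h2⟩) <;> split_ifs <;> constructor <;> linarith
    · intro hx
      split_ifs at hx
      all_goals first
        | (left; constructor <;> linarith)
        | (right; constructor <;> linarith)

lemma vol_Ioo_inter_Eset {a b : ℝ} (ha : 0 ≤ a) (ha1 : a ≤ 1) (hb : 0 ≤ b) (hb1 : b ≤ 1) :
    volume (Ioo (0:ℝ) 1 ∩ Eset a b) = ENNReal.ofReal |a - b| := by
  rw [Eset_eq, vol_Ioo_inter_Ioc (le_min ha hb) min_le_max (max_le ha1 hb1),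
    max_sub_min_eq_abs, abs_sub_comm]

section main
variable (μ₀ μ₁ : Measure ℝ) [IsProbabilityMeasure μ₀] [IsProbabilityMeasure μ₁]

lemma lintegral_quantile_abs :
    ∫⁻ s in Ioo (0:ℝ) 1, ENNReal.ofReal |quantile μ₀ s - quantile μ₁ s| =
      ∫⁻ t, ENNReal.ofReal |cdf μ₀ t - cdf μ₁ t| := by
  set R := volume.restrict (Ioo (0:ℝ) 1) with hR
  have h1 : ∫⁻ s, ENNReal.ofReal |quantile μ₀ s - quantile μ₁ s| ∂ R =
      ∫⁻ s, ∫⁻ t, (Dset (quantile μ₀ s) (quantile μ₁ s)).indicator 1 t ∂volume ∂ R := by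
    congr 1; funext s; exact ofReal_abs_eq_lintegral _ _
  set S : Set (ℝ × ℝ) := {p | (quantile μ₀ p.1 ≤ p.2 ∧ ¬ quantile μ₁ p.1 ≤ p.2) ∨
      (quantile μ₁ p.1 ≤ p.2 ∧ ¬ quantile μ₀ p.1 ≤ p.2)} with hS
  have hq₀ : AEMeasurable (fun p : ℝ × ℝ => quantile μ₀ p.1) (R.prod volume) :=
    (aemeasurable_quantile μ₀).comp_quasiMeasurePreserving Measure.quasiMeasurePreserving_fst
  have hq₁ : AEMeasurable (fun p : ℝ × ℝ => quantile μ₁ p.1) (R.prod volume) :=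
    (aemeasurable_quantile μ₁).comp_quasiMeasurePreserving Measure.quasiMeasurePreserving_fst
  have hA₀ : NullMeasurableSet {p : ℝ × ℝ | quantile μ₀ p.1 ≤ p.2} (R.prod volume) :=
    nullMeasurableSet_le hq₀ measurable_snd.aemeasurable
  have hA₁ : NullMeasurableSet {p : ℝ × ℝ | quantile μ₁ p.1 ≤ p.2} (R.prod volume) :=
    nullMeasurableSet_le hq₁ measurable_snd.aemeasurable
  have hSnull : NullMeasurableSet S (R.prod volume) := by
    have : S = ({p : ℝ × ℝ | quantile μ₀ p.1 ≤ p.2} ∩ {p : ℝ × ℝ | quantile μ₁ p.1 ≤ p.2}ᶜ) ∪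
        ({p : ℝ × ℝ | quantile μ₁ p.1 ≤ p.2} ∩ {p : ℝ × ℝ | quantile μ₀ p.1 ≤ p.2}ᶜ) := by
      ext p; simp [hS, mem_setOf_eq]
    rw [this]
    exact ((hA₀.inter hA₁.compl).union (hA₁.inter hA₀.compl))
  have hmeas : AEMeasurable (Function.uncurry fun s t =>
      (Dset (quantile μ₀ s) (quantile μ₁ s)).indicator (1 : ℝ → ℝ≥0∞) t) (R.prod volume) := by
    have heq : (Function.uncurry fun s t =>
        (Dset (quantile μ₀ s) (quantile μ₁ s)).indicator (1 : ℝ → ℝ≥0∞) t) =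
        S.indicator (fun _ => 1) := by
      funext p
      simp only [Function.uncurry, Set.indicator_apply, hS, Dset, mem_setOf_eq, Pi.one_apply]
    rw [heq]
    exact (aemeasurable_const.indicator₀ hSnull)
  have h2 : ∫⁻ s, ∫⁻ t, (Dset (quantile μ₀ s) (quantile μ₁ s)).indicator 1 t ∂volume ∂ R =
      ∫⁻ t, ∫⁻ s, (Dset (quantile μ₀ s) (quantile μ₁ s)).indicator 1 t ∂ R ∂volume :=
    lintegral_lintegral_swap hmeas
  have h3 : ∀ t : ℝ, ∫⁻ s, (Dset (quantile μ₀ s) (quantile μ₁ s)).indicator 1 t ∂ R =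
      ENNReal.ofReal |cdf μ₀ t - cdf μ₁ t| := by
    intro t
    have hcong : ∫⁻ s, (Dset (quantile μ₀ s) (quantile μ₁ s)).indicator 1 t ∂ R =
        ∫⁻ s, (Eset (cdf μ₀ t) (cdf μ₁ t)).indicator 1 s ∂ R := by
      rw [hR]
      refine setLIntegral_congr_fun measurableSet_Ioo ?_
      intro s hs
      simp only [Set.indicator_apply, Dset, Eset, mem_setOf_eq, Pi.one_apply,
        quantile_le_iff μ₀ hs.1 hs.2, quantile_le_iff μ₁ hs.1 hs.2]
    rw [hcong, hR, lintegral_indicator_one (by rw [Eset_eq]; exact measurableSet_Ioc),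
      Measure.restrict_apply' measurableSet_Ioo, Set.inter_comm,
      vol_Ioo_inter_Eset (cdf_nonneg μ₀ t) (cdf_le_one μ₀ t) (cdf_nonneg μ₁ t) (cdf_le_one μ₁ t)]
  calc ∫⁻ s, ENNReal.ofReal |quantile μ₀ s - quantile μ₁ s| ∂ R
      = ∫⁻ t, ∫⁻ s, (Dset (quantile μ₀ s) (quantile μ₁ s)).indicator 1 t ∂ R ∂volume := by
        rw [h1, h2]
    _ = ∫⁻ t, ENNReal.ofReal |cdf μ₀ t - cdf μ₁ t| := by
        congr 1; funext t; exact h3 t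

end main

section lower
variable (μ₀ μ₁ : Measure ℝ) [IsProbabilityMeasure μ₀] [IsProbabilityMeasure μ₁]

lemma coupling_cost_ge (γ : Measure (ℝ × ℝ)) (hγ₀ : γ.map Prod.fst = μ₀)
    (hγ₁ : γ.map Prod.snd = μ₁) :
    ∫⁻ t, ENNReal.ofReal |ProbabilityTheory.cdf μ₀ t - ProbabilityTheory.cdf μ₁ t| ≤
      ∫⁻ p, ENNReal.ofReal |p.1 - p.2| ∂γ := by
  have hγuniv : γ univ = 1 := by
    have := congrArg (fun m : Measure ℝ => m univ) hγ₀
    simpa [Measure.map_apply measurable_fst MeasurableSet.univ] using this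
  haveI : IsProbabilityMeasure γ := ⟨hγuniv⟩
  have h1 : ∫⁻ p, ENNReal.ofReal |p.1 - p.2| ∂γ =
      ∫⁻ p, ∫⁻ t, (Dset p.1 p.2).indicator 1 t ∂volume ∂γ := by
    congr 1; funext p; exact ofReal_abs_eq_lintegral _ _
  have hM : MeasurableSet {q : (ℝ × ℝ) × ℝ |
      (q.1.1 ≤ q.2 ∧ ¬ q.1.2 ≤ q.2) ∨ (q.1.2 ≤ q.2 ∧ ¬ q.1.1 ≤ q.2)} := by
    have hA : MeasurableSet {q : (ℝ × ℝ) × ℝ | q.1.1 ≤ q.2} :=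
      measurableSet_le (measurable_fst.comp measurable_fst) measurable_snd
    have hB : MeasurableSet {q : (ℝ × ℝ) × ℝ | q.1.2 ≤ q.2} :=
      measurableSet_le (measurable_snd.comp measurable_fst) measurable_snd
    exact (hA.inter hB.compl).union (hB.inter hA.compl)
  have hmeas : AEMeasurable (Function.uncurry fun (p : ℝ × ℝ) (t : ℝ) =>
      (Dset p.1 p.2).indicator (1 : ℝ → ℝ≥0∞) t) (γ.prod volume) := by
    have heq : (Function.uncurry fun (p : ℝ × ℝ) (t : ℝ) =>
        (Dset p.1 p.2).indicator (1 : ℝ → ℝ≥0∞) t) =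
        ({q : (ℝ × ℝ) × ℝ |
          (q.1.1 ≤ q.2 ∧ ¬ q.1.2 ≤ q.2) ∨ (q.1.2 ≤ q.2 ∧ ¬ q.1.1 ≤ q.2)}).indicator
          (fun _ => 1) := by
      funext q
      simp only [Function.uncurry, Set.indicator_apply, Dset, mem_setOf_eq, Pi.one_apply]
    rw [heq]
    exact ((measurable_const.indicator hM).aemeasurable)
  have h2 := lintegral_lintegral_swap hmeas
  have h3 : ∀ t : ℝ, ENNReal.ofReal |ProbabilityTheory.cdf μ₀ t - ProbabilityTheory.cdf μ₁ t| ≤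
      ∫⁻ p, (Dset p.1 p.2).indicator 1 t ∂γ := by
    intro t
    set St : Set (ℝ × ℝ) := {p | (p.1 ≤ t ∧ ¬ p.2 ≤ t) ∨ (p.2 ≤ t ∧ ¬ p.1 ≤ t)} with hSt
    have hStm : MeasurableSet St := by
      have hA : MeasurableSet {p : ℝ × ℝ | p.1 ≤ t} := measurableSet_le measurable_fst measurable_const
      have hB : MeasurableSet {p : ℝ × ℝ | p.2 ≤ t} := measurableSet_le measurable_snd measurable_const
      exact (hA.inter hB.compl).union (hB.inter hA.compl)
    have heq : ∫⁻ p, (Dset p.1 p.2).indicator 1 t ∂γ = γ St := by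
      have : (fun p : ℝ × ℝ => (Dset p.1 p.2).indicator (1 : ℝ → ℝ≥0∞) t) =
          St.indicator (1 : (ℝ × ℝ) → ℝ≥0∞) := by
        funext p
        simp only [Set.indicator_apply, Dset, hSt, mem_setOf_eq, Pi.one_apply]
      rw [this, lintegral_indicator_one hStm]
    rw [heq]
    have hA : γ (Prod.fst ⁻¹' Iic t) = μ₀ (Iic t) := by
      rw [← hγ₀, Measure.map_apply measurable_fst measurableSet_Iic]
    have hB : γ (Prod.snd ⁻¹' Iic t) = μ₁ (Iic t) := by
      rw [← hγ₁, Measure.map_apply measurable_snd measurableSet_Iic]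
    have hsub₀ : μ₀ (Iic t) ≤ μ₁ (Iic t) + γ St := by
      rw [← hA, ← hB]
      refine le_trans (measure_mono ?_) (measure_union_le _ _)
      intro p hp
      by_cases h : p.2 ≤ t
      · exact Or.inl h
      · exact Or.inr (Or.inl ⟨hp, h⟩)
    have hsub₁ : μ₁ (Iic t) ≤ μ₀ (Iic t) + γ St := by
      rw [← hA, ← hB]
      refine le_trans (measure_mono ?_) (measure_union_le _ _)
      intro p hp
      by_cases h : p.1 ≤ t
      · exact Or.inl h
      · exact Or.inr (Or.inr ⟨hp, h⟩)
    by_cases hfin : γ St = ⊤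
    · rw [hfin]; exact le_top
    · have h0fin : μ₀ (Iic t) ≠ ⊤ := measure_ne_top _ _
      have h1fin : μ₁ (Iic t) ≠ ⊤ := measure_ne_top _ _
      have ht₀ : ProbabilityTheory.cdf μ₀ t ≤ ProbabilityTheory.cdf μ₁ t + (γ St).toReal := by
        rw [ProbabilityTheory.cdf_eq_real, ProbabilityTheory.cdf_eq_real, measureReal_def,
          measureReal_def, ← ENNReal.toReal_add h1fin hfin]
        exact ENNReal.toReal_mono (by simp [hfin, h1fin, ENNReal.add_ne_top]) hsub₀
      have ht₁ : ProbabilityTheory.cdf μ₁ t ≤ ProbabilityTheory.cdf μ₀ t + (γ St).toReal := by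
        rw [ProbabilityTheory.cdf_eq_real, ProbabilityTheory.cdf_eq_real, measureReal_def,
          measureReal_def, ← ENNReal.toReal_add h0fin hfin]
        exact ENNReal.toReal_mono (by simp [hfin, h0fin, ENNReal.add_ne_top]) hsub₁
      have habs : |ProbabilityTheory.cdf μ₀ t - ProbabilityTheory.cdf μ₁ t| ≤ (γ St).toReal := by
        rw [abs_sub_le_iff]; constructor <;> linarith
      calc ENNReal.ofReal |ProbabilityTheory.cdf μ₀ t - ProbabilityTheory.cdf μ₁ t|
          ≤ ENNReal.ofReal (γ St).toReal := ENNReal.ofReal_le_ofReal habs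
        _ = γ St := ENNReal.ofReal_toReal hfin
  calc ∫⁻ t, ENNReal.ofReal |ProbabilityTheory.cdf μ₀ t - ProbabilityTheory.cdf μ₁ t|
      ≤ ∫⁻ t, ∫⁻ p, (Dset p.1 p.2).indicator 1 t ∂γ ∂volume := lintegral_mono h3
    _ = ∫⁻ p, ∫⁻ t, (Dset p.1 p.2).indicator 1 t ∂volume ∂γ := h2.symm
    _ = ∫⁻ p, ENNReal.ofReal |p.1 - p.2| ∂γ := h1.symm

end lower

section finite
variable (μ : Measure ℝ) [IsProbabilityMeasure μ]

lemma tail_left : ∫⁻ t in Iic (0:ℝ), μ (Iic t) ≤ 1 + ∫⁻ x, ENNReal.ofReal (x ^ 2) ∂μ := by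
  have h1 : ∫⁻ t in Iic (0:ℝ), μ (Iic t) =
      ∫⁻ t in Iic (0:ℝ), ∫⁻ x, (Iic t).indicator (1 : ℝ → ℝ≥0∞) x ∂μ := by
    congr 1; funext t; rw [lintegral_indicator_one measurableSet_Iic]
  have hM : MeasurableSet {q : ℝ × ℝ | q.2 ≤ q.1} := measurableSet_le measurable_snd measurable_fst
  have hmeas : AEMeasurable (Function.uncurry fun (t : ℝ) (x : ℝ) =>
      (Iic t).indicator (1 : ℝ → ℝ≥0∞) x) ((volume.restrict (Iic (0:ℝ))).prod μ) := by
    have heq : (Function.uncurry fun (t : ℝ) (x : ℝ) => (Iic t).indicator (1 : ℝ → ℝ≥0∞) x) =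
        ({q : ℝ × ℝ | q.2 ≤ q.1}).indicator 1 := by
      funext q
      simp [Function.uncurry, Set.indicator_apply]
    rw [heq]
    exact (measurable_const.indicator hM).aemeasurable
  have h2 := lintegral_lintegral_swap hmeas
  have h3 : ∀ x : ℝ, ∫⁻ t in Iic (0:ℝ), (Iic t).indicator (1 : ℝ → ℝ≥0∞) x =
      ENNReal.ofReal (0 - x) := by
    intro x
    have : (fun t => (Iic t).indicator (1 : ℝ → ℝ≥0∞) x) = (Ici x).indicator (1 : ℝ → ℝ≥0∞) := by
      funext t
      simp [Set.indicator_apply]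
    rw [this, lintegral_indicator_one measurableSet_Ici,
      Measure.restrict_apply' measurableSet_Iic, Ici_inter_Iic, Real.volume_Icc]
  calc ∫⁻ t in Iic (0:ℝ), μ (Iic t)
      = ∫⁻ x, (∫⁻ t in Iic (0:ℝ), (Iic t).indicator (1 : ℝ → ℝ≥0∞) x) ∂μ := by rw [h1, h2]
    _ = ∫⁻ x, ENNReal.ofReal (0 - x) ∂μ := by congr 1; funext x; exact h3 x
    _ ≤ ∫⁻ x, (1 + ENNReal.ofReal (x ^ 2)) ∂μ := by
        refine lintegral_mono fun x => ?_
        have : (0:ℝ) - x ≤ 1 + x ^ 2 := by nlinarith [sq_nonneg (x + 1)]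
        calc ENNReal.ofReal (0 - x) ≤ ENNReal.ofReal (1 + x ^ 2) := ENNReal.ofReal_le_ofReal this
          _ = ENNReal.ofReal 1 + ENNReal.ofReal (x ^ 2) :=
              ENNReal.ofReal_add zero_le_one (sq_nonneg x)
          _ = 1 + ENNReal.ofReal (x ^ 2) := by rw [ENNReal.ofReal_one]
    _ = 1 + ∫⁻ x, ENNReal.ofReal (x ^ 2) ∂μ := by
        rw [lintegral_add_left measurable_const, lintegral_const, measure_univ, mul_one]

lemma tail_right : ∫⁻ t in Ioi (0:ℝ), μ (Ioi t) ≤ 1 + ∫⁻ x, ENNReal.ofReal (x ^ 2) ∂μ := by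
  have h1 : ∫⁻ t in Ioi (0:ℝ), μ (Ioi t) =
      ∫⁻ t in Ioi (0:ℝ), ∫⁻ x, (Ioi t).indicator (1 : ℝ → ℝ≥0∞) x ∂μ := by
    congr 1; funext t; rw [lintegral_indicator_one measurableSet_Ioi]
  have hM : MeasurableSet {q : ℝ × ℝ | q.1 < q.2} := measurableSet_lt measurable_fst measurable_snd
  have hmeas : AEMeasurable (Function.uncurry fun (t : ℝ) (x : ℝ) =>
      (Ioi t).indicator (1 : ℝ → ℝ≥0∞) x) ((volume.restrict (Ioi (0:ℝ))).prod μ) := by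
    have heq : (Function.uncurry fun (t : ℝ) (x : ℝ) => (Ioi t).indicator (1 : ℝ → ℝ≥0∞) x) =
        ({q : ℝ × ℝ | q.1 < q.2}).indicator 1 := by
      funext q
      simp [Function.uncurry, Set.indicator_apply]
    rw [heq]
    exact (measurable_const.indicator hM).aemeasurable
  have h2 := lintegral_lintegral_swap hmeas
  have h3 : ∀ x : ℝ, ∫⁻ t in Ioi (0:ℝ), (Ioi t).indicator (1 : ℝ → ℝ≥0∞) x =
      ENNReal.ofReal (x - 0) := by
    intro x
    have : (fun t => (Ioi t).indicator (1 : ℝ → ℝ≥0∞) x) = (Iio x).indicator (1 : ℝ → ℝ≥0∞) := by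
      funext t
      simp [Set.indicator_apply]
    rw [this, lintegral_indicator_one measurableSet_Iio,
      Measure.restrict_apply' measurableSet_Ioi, Iio_inter_Ioi, Real.volume_Ioo]
  calc ∫⁻ t in Ioi (0:ℝ), μ (Ioi t)
      = ∫⁻ x, (∫⁻ t in Ioi (0:ℝ), (Ioi t).indicator (1 : ℝ → ℝ≥0∞) x) ∂μ := by rw [h1, h2]
    _ = ∫⁻ x, ENNReal.ofReal (x - 0) ∂μ := by congr 1; funext x; exact h3 x
    _ ≤ ∫⁻ x, (1 + ENNReal.ofReal (x ^ 2)) ∂μ := by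
        refine lintegral_mono fun x => ?_
        have : x - 0 ≤ 1 + x ^ 2 := by nlinarith [sq_nonneg (x - 1)]
        calc ENNReal.ofReal (x - 0) ≤ ENNReal.ofReal (1 + x ^ 2) := ENNReal.ofReal_le_ofReal this
          _ = ENNReal.ofReal 1 + ENNReal.ofReal (x ^ 2) :=
              ENNReal.ofReal_add zero_le_one (sq_nonneg x)
          _ = 1 + ENNReal.ofReal (x ^ 2) := by rw [ENNReal.ofReal_one]
    _ = 1 + ∫⁻ x, ENNReal.ofReal (x ^ 2) ∂μ := by
        rw [lintegral_add_left measurable_const, lintegral_const, measure_univ, mul_one]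

lemma ofReal_one_sub_cdf (t : ℝ) :
    ENNReal.ofReal (1 - ProbabilityTheory.cdf μ t) = μ (Ioi t) := by
  have h1 : μ (Ioi t) = 1 - μ (Iic t) := by
    rw [← compl_Iic]
    exact prob_compl_eq_one_sub measurableSet_Iic
  have h2 : (1:ℝ) - ProbabilityTheory.cdf μ t = (μ (Ioi t)).toReal := by
    rw [ProbabilityTheory.cdf_eq_real, measureReal_def, h1,
      ENNReal.toReal_sub_of_le prob_le_one ENNReal.one_ne_top, ENNReal.toReal_one]
  rw [h2, ENNReal.ofReal_toReal (measure_ne_top _ _)]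

end finite

section fin2
variable (μ₀ μ₁ : Measure ℝ) [IsProbabilityMeasure μ₀] [IsProbabilityMeasure μ₁]

lemma lintegral_cdf_abs_lt_top
    (h₀ : ∫⁻ x, ENNReal.ofReal (x ^ 2) ∂μ₀ < ⊤) (h₁ : ∫⁻ x, ENNReal.ofReal (x ^ 2) ∂μ₁ < ⊤) :
    ∫⁻ t, ENNReal.ofReal |ProbabilityTheory.cdf μ₀ t - ProbabilityTheory.cdf μ₁ t| < ⊤ := by
  set F₀ := ProbabilityTheory.cdf μ₀ with hF₀
  set F₁ := ProbabilityTheory.cdf μ₁ with hF₁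
  have hm₀ : Measurable fun t => μ₀ (Iic t) :=
    Monotone.measurable (fun a b hab => measure_mono (Iic_subset_Iic.2 hab))
  have hm₀' : Measurable fun t => μ₀ (Ioi t) := by
    have : (fun t => μ₀ (Ioi t)) = fun t => 1 - μ₀ (Iic t) := by
      funext t
      rw [← compl_Iic]
      exact prob_compl_eq_one_sub measurableSet_Iic
    rw [this]
    exact measurable_const.sub hm₀
  have hsplit : ∫⁻ t, ENNReal.ofReal |F₀ t - F₁ t| =
      (∫⁻ t in Iic (0:ℝ), ENNReal.ofReal |F₀ t - F₁ t|) +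
      ∫⁻ t in Ioi (0:ℝ), ENNReal.ofReal |F₀ t - F₁ t| := by
    rw [← lintegral_add_compl (fun t => ENNReal.ofReal |F₀ t - F₁ t|) measurableSet_Iic, compl_Iic]
  have hleft : ∫⁻ t in Iic (0:ℝ), ENNReal.ofReal |F₀ t - F₁ t| ≤
      (∫⁻ t in Iic (0:ℝ), μ₀ (Iic t)) + ∫⁻ t in Iic (0:ℝ), μ₁ (Iic t) := by
    rw [← lintegral_add_left hm₀]
    refine lintegral_mono fun t => ?_
    have habs : |F₀ t - F₁ t| ≤ F₀ t + F₁ t := by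
      rw [abs_sub_le_iff]
      constructor <;> nlinarith [cdf_nonneg μ₀ t, cdf_nonneg μ₁ t]
    calc ENNReal.ofReal |F₀ t - F₁ t| ≤ ENNReal.ofReal (F₀ t + F₁ t) :=
          ENNReal.ofReal_le_ofReal habs
      _ = ENNReal.ofReal (F₀ t) + ENNReal.ofReal (F₁ t) :=
          ENNReal.ofReal_add (cdf_nonneg μ₀ t) (cdf_nonneg μ₁ t)
      _ = μ₀ (Iic t) + μ₁ (Iic t) := by rw [hF₀, hF₁, ofReal_cdf, ofReal_cdf]
  have hright : ∫⁻ t in Ioi (0:ℝ), ENNReal.ofReal |F₀ t - F₁ t| ≤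
      (∫⁻ t in Ioi (0:ℝ), μ₀ (Ioi t)) + ∫⁻ t in Ioi (0:ℝ), μ₁ (Ioi t) := by
    rw [← lintegral_add_left hm₀']
    refine lintegral_mono fun t => ?_
    have habs : |F₀ t - F₁ t| ≤ (1 - F₀ t) + (1 - F₁ t) := by
      rw [abs_sub_le_iff]
      constructor <;> nlinarith [cdf_le_one μ₀ t, cdf_le_one μ₁ t]
    calc ENNReal.ofReal |F₀ t - F₁ t| ≤ ENNReal.ofReal ((1 - F₀ t) + (1 - F₁ t)) :=
          ENNReal.ofReal_le_ofReal habs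
      _ = ENNReal.ofReal (1 - F₀ t) + ENNReal.ofReal (1 - F₁ t) :=
          ENNReal.ofReal_add (by linarith [cdf_le_one μ₀ t]) (by linarith [cdf_le_one μ₁ t])
      _ = μ₀ (Ioi t) + μ₁ (Ioi t) := by
          rw [hF₀, hF₁, ofReal_one_sub_cdf, ofReal_one_sub_cdf]
  have hfin : (1 + ∫⁻ x, ENNReal.ofReal (x ^ 2) ∂μ₀) + (1 + ∫⁻ x, ENNReal.ofReal (x ^ 2) ∂μ₁)
      < ⊤ := by
    refine ENNReal.add_lt_top.2 ⟨?_, ?_⟩ <;>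
      exact ENNReal.add_lt_top.2 ⟨ENNReal.one_lt_top, by assumption⟩
  calc ∫⁻ t, ENNReal.ofReal |F₀ t - F₁ t|
      ≤ ((∫⁻ t in Iic (0:ℝ), μ₀ (Iic t)) + ∫⁻ t in Iic (0:ℝ), μ₁ (Iic t)) +
        ((∫⁻ t in Ioi (0:ℝ), μ₀ (Ioi t)) + ∫⁻ t in Ioi (0:ℝ), μ₁ (Ioi t)) := by
        rw [hsplit]; exact add_le_add hleft hright
    _ ≤ ((1 + ∫⁻ x, ENNReal.ofReal (x ^ 2) ∂μ₀) + (1 + ∫⁻ x, ENNReal.ofReal (x ^ 2) ∂μ₁)) +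
        ((1 + ∫⁻ x, ENNReal.ofReal (x ^ 2) ∂μ₀) + (1 + ∫⁻ x, ENNReal.ofReal (x ^ 2) ∂μ₁)) := by
        refine add_le_add (add_le_add (tail_left μ₀) (tail_left μ₁))
          (add_le_add (tail_right μ₀) (tail_right μ₁))
    _ < ⊤ := ENNReal.add_lt_top.2 ⟨hfin, hfin⟩

end fin2


/-- For absolutely continuous probability measures on ℝ with finite second moments,
the `L¹` optimal transport cost equals
`∫₀¹ |F₀^{[-1]}(s) − F₁^{[-1]}(s)| ds = ∫_ℝ |F₀(x) − F₁(x)| dx`. -/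
theorem W1_eq_quantile_integral_eq_cdf_integral (μ₀ μ₁ : Measure ℝ)
    [IsProbabilityMeasure μ₀] [IsProbabilityMeasure μ₁]
    (hac₀ : μ₀ ≪ volume) (hac₁ : μ₁ ≪ volume)
    (h₀ : ∫⁻ x, ENNReal.ofReal (x ^ 2) ∂μ₀ < ⊤)
    (h₁ : ∫⁻ x, ENNReal.ofReal (x ^ 2) ∂μ₁ < ⊤) :
    W1 μ₀ μ₁ = ENNReal.ofReal (∫ s in Ioo (0 : ℝ) 1, |quantile μ₀ s - quantile μ₁ s|) ∧
    ∫ s in Ioo (0 : ℝ) 1, |quantile μ₀ s - quantile μ₁ s| =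
      ∫ x : ℝ, |(μ₀ (Iic x)).toReal - (μ₁ (Iic x)).toReal| := by
  set L : ℝ≥0∞ := ∫⁻ t, ENNReal.ofReal |ProbabilityTheory.cdf μ₀ t - ProbabilityTheory.cdf μ₁ t|
    with hL
  have hLfin : L ≠ ⊤ := (lintegral_cdf_abs_lt_top μ₀ μ₁ h₀ h₁).ne
  set R := volume.restrict (Ioo (0:ℝ) 1) with hRdef
  -- the quantile coupling
  set γ : Measure (ℝ × ℝ) := R.map (fun s => (quantile μ₀ s, quantile μ₁ s)) with hγdef
  have hpair : AEMeasurable (fun s => (quantile μ₀ s, quantile μ₁ s)) R :=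
    (aemeasurable_quantile μ₀).prodMk (aemeasurable_quantile μ₁)
  have hfst : γ.map Prod.fst = μ₀ := by
    rw [hγdef, AEMeasurable.map_map_of_aemeasurable measurable_fst.aemeasurable hpair]
    exact map_quantile μ₀
  have hsnd : γ.map Prod.snd = μ₁ := by
    rw [hγdef, AEMeasurable.map_map_of_aemeasurable measurable_snd.aemeasurable hpair]
    exact map_quantile μ₁
  have hcost : ∫⁻ p, ENNReal.ofReal |p.1 - p.2| ∂γ = L := by
    rw [hγdef, lintegral_map' (f := fun p : ℝ × ℝ => ENNReal.ofReal |p.1 - p.2|)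
      ((measurable_fst.sub measurable_snd).abs.ennreal_ofReal :
        Measurable fun p : ℝ × ℝ => ENNReal.ofReal |p.1 - p.2|).aemeasurable hpair]
    exact lintegral_quantile_abs μ₀ μ₁
  have hW1 : W1 μ₀ μ₁ = L := by
    refine le_antisymm (sInf_le ⟨γ, hfst, hsnd, hcost.symm⟩) (le_sInf ?_)
    rintro c ⟨γ', hγ'₀, hγ'₁, rfl⟩
    exact coupling_cost_ge μ₀ μ₁ γ' hγ'₀ hγ'₁
  have hQlint : ∫⁻ s in Ioo (0:ℝ) 1, ENNReal.ofReal |quantile μ₀ s - quantile μ₁ s| = L :=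
    lintegral_quantile_abs μ₀ μ₁
  have hQint : ∫ s in Ioo (0:ℝ) 1, |quantile μ₀ s - quantile μ₁ s| = L.toReal := by
    rw [integral_eq_lintegral_of_nonneg_ae (Filter.Eventually.of_forall fun s => abs_nonneg _)
      ((continuous_abs.measurable.comp_aemeasurable ((aemeasurable_quantile μ₀).sub (aemeasurable_quantile μ₁)) :
        AEMeasurable (fun s => |quantile μ₀ s - quantile μ₁ s|) _).aestronglyMeasurable),
      hQlint]
  have hCint : ∫ x : ℝ, |(μ₀ (Iic x)).toReal - (μ₁ (Iic x)).toReal| = L.toReal := by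
    have hcdf : (fun x : ℝ => |(μ₀ (Iic x)).toReal - (μ₁ (Iic x)).toReal|) =
        fun x => |ProbabilityTheory.cdf μ₀ x - ProbabilityTheory.cdf μ₁ x| := by
      funext x
      rw [ProbabilityTheory.cdf_eq_real, ProbabilityTheory.cdf_eq_real, measureReal_def,
        measureReal_def]
    rw [hcdf, integral_eq_lintegral_of_nonneg_ae
      (f := fun x => |ProbabilityTheory.cdf μ₀ x - ProbabilityTheory.cdf μ₁ x|) (Filter.Eventually.of_forall fun x => abs_nonneg _)
      ((((monotone_cdf μ₀).measurable.sub (monotone_cdf μ₁).measurable).abs :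
        Measurable fun x => |ProbabilityTheory.cdf μ₀ x - ProbabilityTheory.cdf μ₁ x|).aestronglyMeasurable)]
  constructor
  · rw [hW1, hQint, ENNReal.ofReal_toReal hLfin]
  · rw [hQint, hCint]
end

section
/- Let μ₀ be a probability measure on the circle S¹ (parametrized by θ ∈ [0, 2π)) with density p₀, and let μ₁ have density p₁ = p₀ + a·cos(kθ) for a fixed integer k ≥ 1 and a ∈ ℝ, where additionally p₀ − (a cos)⁻(kθ) ≥ 0 pointwise. Then W₂²(μ₀, μ₁) ≤ (2π²/k²)·|a|, where W₂ is the quadratic Wasserstein distance on S¹ with cost c(θ,φ) = min(|θ−φ|, 2π−|θ−φ|)². -/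
open MeasureTheory Set Real
open scoped ENNReal

/-- The squared geodesic cost on the circle parametrized by `[0, 2π)`. -/
noncomputable def circleCost (θ φ : ℝ) : ℝ :=
  (min |θ - φ| (2 * π - |θ - φ|)) ^ 2

/-- The quadratic Wasserstein cost on the circle (as infimum over couplings of measures on
the parametrizing interval). -/
noncomputable def W2sqCircle (μ ν : Measure ℝ) : ENNReal :=
  sInf {c | ∃ γ : Measure (ℝ × ℝ), γ.map Prod.fst = μ ∧ γ.map Prod.snd = ν ∧
    c = ∫⁻ p, ENNReal.ofReal (circleCost p.1 p.2) ∂γ}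

section Aux

open intervalIntegral

lemma abs_cos_integral : ∫ x in (0:ℝ)..(2*π), |cos x| = 4 := by
  have hpi := pi_pos
  have h1 : ∫ x in (0:ℝ)..(π/2), |cos x| = 1 := by
    rw [integral_congr (g := cos) (fun x hx => ?_), integral_cos]
    · simp
    · rw [uIcc_of_le (by linarith)] at hx
      exact abs_of_nonneg (cos_nonneg_of_mem_Icc ⟨by linarith [hx.1], hx.2⟩)
  have h2 : ∫ x in (π/2)..(3*π/2), |cos x| = 2 := by
    rw [integral_congr (g := fun x => -cos x) (fun x hx => ?_)]
    · rw [intervalIntegral.integral_neg, integral_cos]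
      have : sin (3*π/2) = -1 := by
        have : (3*π/2 : ℝ) = π + π/2 := by ring
        rw [this, sin_add]; simp
      rw [this]; simp; norm_num
    · rw [uIcc_of_le (by linarith)] at hx
      exact abs_of_nonpos (cos_nonpos_of_pi_div_two_le_of_le hx.1 (by linarith [hx.2]))
  have h3 : ∫ x in (3*π/2)..(2*π), |cos x| = 1 := by
    rw [integral_congr (g := cos) (fun x hx => ?_), integral_cos]
    · have : sin (3*π/2) = -1 := by
        have : (3*π/2 : ℝ) = π + π/2 := by ring
        rw [this, sin_add]; simp
      rw [this, sin_two_pi]; norm_num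
    · rw [uIcc_of_le (by linarith)] at hx
      have h2pi : x ≤ 2*π := hx.2
      have : cos x = cos (2*π - x) := by rw [cos_two_pi_sub]
      rw [this]
      exact abs_of_nonneg (cos_nonneg_of_mem_Icc ⟨by linarith [hx.1], by linarith [hx.1]⟩)
  have i1 : IntervalIntegrable (fun x => |cos x|) volume 0 (π/2) :=
    (continuous_abs.comp continuous_cos).intervalIntegrable _ _
  have i2 : IntervalIntegrable (fun x => |cos x|) volume (π/2) (3*π/2) :=
    (continuous_abs.comp continuous_cos).intervalIntegrable _ _
  have i3 : IntervalIntegrable (fun x => |cos x|) volume (3*π/2) (2*π) :=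
    (continuous_abs.comp continuous_cos).intervalIntegrable _ _
  rw [← integral_add_adjacent_intervals (i1.trans i2) i3,
      ← integral_add_adjacent_intervals i1 i2, h1, h2, h3]
  norm_num

lemma cos_k_integral (k : ℕ) (hk : 1 ≤ k) : ∫ x in (0:ℝ)..(2*π), cos ((k:ℝ)*x) = 0 := by
  have hkR : (k:ℝ) ≠ 0 := Nat.cast_ne_zero.2 (by omega)
  rw [integral_comp_mul_left _ hkR, mul_zero]
  rw [integral_cos]
  rw [show (k:ℝ)*(2*π) = ((2*k : ℕ) : ℝ) * π by push_cast; ring, sin_nat_mul_pi]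
  simp

lemma abs_cos_k_integral (k : ℕ) (hk : 1 ≤ k) : ∫ x in (0:ℝ)..(2*π), |cos ((k:ℝ)*x)| = 4 := by
  have hkR : (k:ℝ) ≠ 0 := Nat.cast_ne_zero.2 (by omega)
  rw [integral_comp_mul_left (fun x => |cos x|) hkR, mul_zero]
  have hper : Function.Periodic (fun x => |cos x|) (2*π) := fun x => by simp [cos_add_two_pi]
  have hint : ∀ t₁ t₂, IntervalIntegrable (fun x => |cos x|) volume t₁ t₂ :=
    fun _ _ => (continuous_abs.comp continuous_cos).intervalIntegrable _ _
  have heq := hper.intervalIntegral_add_zsmul_eq (k : ℤ) 0 hint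
  simp only [zero_add] at heq
  rw [show (k:ℝ)*(2*π) = ((k:ℤ) • (2*π) : ℝ) by rw [zsmul_eq_mul]; push_cast; ring, heq, abs_cos_integral]
  rw [show ((k:ℤ) • (4:ℝ)) = (k:ℝ) * 4 by rw [zsmul_eq_mul]; push_cast; ring, smul_eq_mul,
    inv_mul_cancel_left₀ hkR]

lemma negpart_integral (k : ℕ) (hk : 1 ≤ k) (a : ℝ) :
    ∫ x in (0:ℝ)..(2*π), max (-(a * cos ((k:ℝ)*x))) 0 = 2 * |a| := by
  have h : ∀ x, max (-(a * cos ((k:ℝ)*x))) 0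
      = (|a| * |cos ((k:ℝ)*x)| - a * cos ((k:ℝ)*x)) / 2 := by
    intro x
    rw [← abs_mul]
    rcases le_or_gt (a * cos ((k:ℝ)*x)) 0 with h | h
    · rw [max_eq_left (by linarith), abs_of_nonpos h]; ring
    · rw [max_eq_right (by linarith), abs_of_pos h]; ring
  simp_rw [h]
  have i1 : IntervalIntegrable (fun x => |a| * |cos ((k:ℝ)*x)|) volume 0 (2*π) :=
    ((continuous_const.mul ((continuous_abs.comp (continuous_cos.comp
      (continuous_const.mul continuous_id))))).intervalIntegrable _ _)
  have i2 : IntervalIntegrable (fun x => a * cos ((k:ℝ)*x)) volume 0 (2*π) :=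
    ((continuous_const.mul (continuous_cos.comp
      (continuous_const.mul continuous_id))).intervalIntegrable _ _)
  rw [intervalIntegral.integral_div, integral_sub i1 i2, intervalIntegral.integral_const_mul,
    intervalIntegral.integral_const_mul,
    abs_cos_k_integral k hk, cos_k_integral k hk]
  ring

lemma map_add_withDensity (c : ℝ) {A A' : Set ℝ} (hA : MeasurableSet A)
    (hA' : MeasurableSet A') (hpre : (fun x => x + c) ⁻¹' A' = A)
    {g : ℝ → ℝ≥0∞} (hg : Measurable g) :
    ((volume.restrict A).withDensity g).map (· + c) =
      (volume.restrict A').withDensity (fun x => g (x - c)) := by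
  ext s hs
  rw [Measure.map_apply (measurable_add_const c) hs,
    withDensity_apply _ (hs.preimage (measurable_add_const c)),
    withDensity_apply _ hs,
    Measure.restrict_restrict (hs.preimage (measurable_add_const c)),
    Measure.restrict_restrict hs,
    ← lintegral_indicator ((hs.preimage (measurable_add_const c)).inter hA),
    ← lintegral_indicator (hs.inter hA')]
  have key : ∀ x, ((s ∩ A').indicator (fun y => g (y - c))) (x + c)
      = (((fun y => y + c) ⁻¹' s ∩ A).indicator g) x := by
    intro x
    rw [← hpre]
    by_cases hx : x + c ∈ s ∩ A'
    · rw [indicator_of_mem hx, indicator_of_mem (by exact ⟨hx.1, hx.2⟩), add_sub_cancel_right]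
    · rw [indicator_of_notMem hx, indicator_of_notMem (fun h => hx ⟨h.1, h.2⟩)]
  calc ∫⁻ x, (((fun y => y + c) ⁻¹' s ∩ A).indicator g) x
      = ∫⁻ x, ((s ∩ A').indicator (fun y => g (y - c))) (x + c) := by
        simp_rw [key]
    _ = ∫⁻ x, ((s ∩ A').indicator (fun y => g (y - c))) x := by
        have hm : Measurable ((s ∩ A').indicator (fun y => g (y - c))) :=
          Measurable.indicator (by exact hg.comp (measurable_sub_const c)) (hs.inter hA')
        conv_rhs => rw [← map_add_right_eq_self volume c]
        rw [lintegral_map hm (measurable_add_const c)]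

end Aux

/-- Single-frequency frequency-sensitivity bound on the circle: if `μ₁` has density
`p₀ + a cos (k θ)` with `p₀ - (a cos)⁻(kθ) ≥ 0`, then `W₂²(μ₀, μ₁) ≤ (2π²/k²)·|a|`. -/
theorem W2sq_circle_single_frequency (p₀ : ℝ → ℝ) (a : ℝ) (k : ℕ) (hk : 1 ≤ k)
    (hp₀ : ∀ θ, 0 ≤ p₀ θ)
    (μ₀ μ₁ : Measure ℝ)
    (hμ₀ : μ₀ = (volume.restrict (Ico 0 (2 * π))).withDensity
      (fun θ => ENNReal.ofReal (p₀ θ)))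
    (hμ₁ : μ₁ = (volume.restrict (Ico 0 (2 * π))).withDensity
      (fun θ => ENNReal.ofReal (p₀ θ + a * Real.cos (k * θ))))
    [IsProbabilityMeasure μ₀] [IsProbabilityMeasure μ₁]
    (hν : ∀ θ, 0 ≤ p₀ θ - max (-(a * Real.cos (k * θ))) 0) :
    W2sqCircle μ₀ μ₁ ≤ ENNReal.ofReal (2 * π ^ 2 / (k : ℝ) ^ 2 * |a|) := by
  have hπ := pi_pos
  have hkR : (0:ℝ) < k := by exact_mod_cast Nat.lt_of_lt_of_le Nat.zero_lt_one hk
  set c : ℝ := π / k with hc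
  have hc0 : 0 < c := div_pos hπ hkR
  have hcπ : c ≤ π := by
    rw [hc, div_le_iff₀ hkR]
    nlinarith [hπ, (by exact_mod_cast hk : (1:ℝ) ≤ k)]
  -- notation
  set m : ℝ → ℝ := fun θ => max (-(a * Real.cos (k * θ))) 0 with hm
  set q : ℝ → ℝ := fun θ => max (a * Real.cos (k * θ)) 0 with hq
  have hmcont : Continuous m := by
    apply Continuous.max _ continuous_const
    exact (continuous_const.mul (Real.continuous_cos.comp
      (continuous_const.mul continuous_id))).neg
  have hqcont : Continuous q := by
    apply Continuous.max _ continuous_const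
    exact continuous_const.mul (Real.continuous_cos.comp (continuous_const.mul continuous_id))
  set g : ℝ → ℝ≥0∞ := fun θ => ENNReal.ofReal (m θ) with hgdef
  set h : ℝ → ℝ≥0∞ := fun θ => ENNReal.ofReal (q θ) with hhdef
  have hgmeas : Measurable g := ENNReal.measurable_ofReal.comp hmcont.measurable
  have hhmeas : Measurable h := ENNReal.measurable_ofReal.comp hqcont.measurable
  set νd : ℝ → ℝ≥0∞ := fun θ => ENNReal.ofReal (p₀ θ - m θ) with hνd
  set I : Set ℝ := Ico 0 (2*π) with hI
  set A : Set ℝ := Ico 0 (2*π - c) with hA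
  set B : Set ℝ := Ico (2*π - c) (2*π) with hB
  set A' : Set ℝ := Ico c (2*π) with hA'
  set B' : Set ℝ := Ico 0 c with hB'
  set ν : Measure ℝ := (volume.restrict I).withDensity νd with hν'
  set μA : Measure ℝ := (volume.restrict A).withDensity g with hμA
  set μB : Measure ℝ := (volume.restrict B).withDensity g with hμB
  set γ : Measure (ℝ × ℝ) := ν.map (fun θ => (θ, θ)) +
    (μA.map (fun θ => (θ, θ + c)) + μB.map (fun θ => (θ, θ + (c - 2*π)))) with hγ
  -- measurable maps
  have hdiag : Measurable (fun θ : ℝ => (θ, θ)) := measurable_id.prodMk measurable_id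
  have hTA : Measurable (fun θ : ℝ => (θ, θ + c)) :=
    measurable_id.prodMk (measurable_add_const c)
  have hTB : Measurable (fun θ : ℝ => (θ, θ + (c - 2*π))) :=
    measurable_id.prodMk (measurable_add_const _)
  -- pieces decompose restrict I
  have hABdisj : Disjoint A B := Set.Ico_disjoint_Ico_same
  have hABunion : A ∪ B = I := Ico_union_Ico_eq_Ico (by linarith) (by linarith)
  have hsplit : μA + μB = (volume.restrict I).withDensity g := by
    rw [hμA, hμB, ← withDensity_add_measure, ← Measure.restrict_union hABdisj measurableSet_Ico,
      hABunion]
  -- first marginal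
  have hfst : γ.map Prod.fst = μ₀ := by
    rw [hγ, Measure.map_add _ _ measurable_fst, Measure.map_add _ _ measurable_fst,
      Measure.map_map measurable_fst hdiag, Measure.map_map measurable_fst hTA,
      Measure.map_map measurable_fst hTB]
    have e1 : (Prod.fst ∘ fun θ : ℝ => (θ, θ)) = id := rfl
    have e2 : (Prod.fst ∘ fun θ : ℝ => (θ, θ + c)) = id := rfl
    have e3 : (Prod.fst ∘ fun θ : ℝ => (θ, θ + (c - 2*π))) = id := rfl
    rw [e1, e2, e3, Measure.map_id, Measure.map_id, Measure.map_id, hsplit, hμ₀, hν']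
    rw [← withDensity_add_right _ hgmeas]
    congr 1
    funext θ
    simp only [Pi.add_apply, hνd, hgdef]
    rw [← ENNReal.ofReal_add (hν θ) (le_max_right _ _)]
    congr 1
    simp [hm]
  -- second marginal
  have hmapA : μA.map (· + c) = (volume.restrict A').withDensity h := by
    rw [hμA, map_add_withDensity c measurableSet_Ico measurableSet_Ico ?_ hgmeas]
    · congr 1
      funext x
      have hkc : (k:ℝ) * (x - c) = k * x - π := by
        rw [hc]; field_simp
      simp only [hgdef, hhdef, hm, hq, hkc, Real.cos_sub_pi]
      congr 1
      rw [mul_neg, neg_neg]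
    · ext x
      simp only [mem_preimage, hA, hA', mem_Ico]
      constructor <;> intro hx <;> constructor <;> linarith [hx.1, hx.2]
  have hmapB : μB.map (· + (c - 2*π)) = (volume.restrict B').withDensity h := by
    rw [hμB, map_add_withDensity (c - 2*π) measurableSet_Ico measurableSet_Ico ?_ hgmeas]
    · congr 1
      funext x
      have hkc : (k:ℝ) * (x - (c - 2*π)) = (k * x - π) + k * (2*π) := by
        rw [hc]; field_simp; ring
      simp only [hgdef, hhdef, hm, hq, hkc]
      rw [Real.cos_add_nat_mul_two_pi, Real.cos_sub_pi]
      congr 1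
      rw [mul_neg, neg_neg]
    · ext x
      simp only [mem_preimage, hB, hB', mem_Ico]
      constructor <;> intro hx <;> constructor <;> linarith [hx.1, hx.2]
  have hsnd : γ.map Prod.snd = μ₁ := by
    rw [hγ, Measure.map_add _ _ measurable_snd, Measure.map_add _ _ measurable_snd,
      Measure.map_map measurable_snd hdiag, Measure.map_map measurable_snd hTA,
      Measure.map_map measurable_snd hTB]
    have e1 : (Prod.snd ∘ fun θ : ℝ => (θ, θ)) = id := rfl
    have e2 : (Prod.snd ∘ fun θ : ℝ => (θ, θ + c)) = (· + c) := rfl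
    have e3 : (Prod.snd ∘ fun θ : ℝ => (θ, θ + (c - 2*π))) = (· + (c - 2*π)) := rfl
    rw [e1, e2, e3, Measure.map_id, hmapA, hmapB]
    have hB'A' : (volume.restrict B').withDensity h + (volume.restrict A').withDensity h
        = (volume.restrict I).withDensity h := by
      rw [← withDensity_add_measure, ← Measure.restrict_union Set.Ico_disjoint_Ico_same
        measurableSet_Ico, Ico_union_Ico_eq_Ico (by linarith) (by linarith)]
    rw [add_comm ((volume.restrict A').withDensity h), hB'A', hμ₁, hν']
    rw [← withDensity_add_right _ hhmeas]
    congr 1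
    funext θ
    simp only [Pi.add_apply, hνd, hhdef]
    rw [← ENNReal.ofReal_add (hν θ) (le_max_right _ _)]
    congr 1
    have : q θ - m θ = a * Real.cos (k * θ) := by
      simp only [hm, hq]
      rcases le_total 0 (a * Real.cos (k * θ)) with hx | hx
      · rw [max_eq_left hx, max_eq_right (by linarith)]; ring
      · rw [max_eq_right hx, max_eq_left (by linarith)]; ring
    linarith [this]
  -- cost function measurable
  have hFcont : Continuous fun p : ℝ × ℝ => circleCost p.1 p.2 := by
    unfold circleCost
    fun_prop
  have hFmeas : Measurable fun p : ℝ × ℝ => ENNReal.ofReal (circleCost p.1 p.2) :=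
    ENNReal.measurable_ofReal.comp hFcont.measurable
  -- cost of the coupling
  have hcost0 : ∫⁻ θ, ENNReal.ofReal (circleCost θ θ) ∂ν = 0 := by
    have hz : ∀ θ : ℝ, ENNReal.ofReal (circleCost θ θ) = 0 := by
      intro θ
      have h0 : circleCost θ θ = 0 := by
        unfold circleCost
        rw [sub_self, abs_zero, sub_zero, min_eq_left (by positivity)]
        norm_num
      rw [h0, ENNReal.ofReal_zero]
    simp_rw [hz]
    exact lintegral_zero
  have hboundA : ∀ θ : ℝ, ENNReal.ofReal (circleCost θ (θ + c)) ≤ ENNReal.ofReal (c^2) := by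
    intro θ
    apply ENNReal.ofReal_le_ofReal
    have habs : |θ - (θ + c)| = c := by
      rw [show θ - (θ + c) = -c by ring, abs_neg, abs_of_pos hc0]
    have h1 : min |θ - (θ + c)| (2*π - |θ - (θ + c)|) ≤ c := by
      rw [habs]; exact min_le_left _ _
    have h2 : 0 ≤ min |θ - (θ + c)| (2*π - |θ - (θ + c)|) := by
      rw [habs]; exact le_min hc0.le (by linarith)
    unfold circleCost
    nlinarith
  have hboundB : ∀ θ : ℝ, ENNReal.ofReal (circleCost θ (θ + (c - 2*π)))
      ≤ ENNReal.ofReal (c^2) := by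
    intro θ
    apply ENNReal.ofReal_le_ofReal
    have habs : |θ - (θ + (c - 2*π))| = 2*π - c := by
      rw [show θ - (θ + (c - 2*π)) = 2*π - c by ring, abs_of_pos (by linarith)]
    have h1 : min |θ - (θ + (c - 2*π))| (2*π - |θ - (θ + (c - 2*π))|) ≤ c := by
      rw [habs]
      refine le_trans (min_le_right _ _) (by linarith)
    have h2 : 0 ≤ min |θ - (θ + (c - 2*π))| (2*π - |θ - (θ + (c - 2*π))|) := by
      rw [habs]; exact le_min (by linarith) (by linarith)
    unfold circleCost
    nlinarith
  -- total mass of moved part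
  have hmass : (volume.restrict I).withDensity g univ = ENNReal.ofReal (2 * |a|) := by
    rw [withDensity_apply _ MeasurableSet.univ, Measure.restrict_univ]
    have hint : Integrable m (volume.restrict I) := by
      apply hmcont.integrableOn_Icc.mono_set Ico_subset_Icc_self
    rw [hgdef, ← ofReal_integral_eq_lintegral_ofReal hint
      (Filter.Eventually.of_forall fun θ => le_max_right _ _)]
    congr 1
    have : ∫ θ in I, m θ = ∫ θ in Ioc 0 (2*π), m θ := by
      apply setIntegral_congr_set
      exact Ico_ae_eq_Ioc
    rw [this, ← intervalIntegral.integral_of_le (by linarith)]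
    exact negpart_integral k hk a
  -- cost bound
  have hcost : (∫⁻ p, ENNReal.ofReal (circleCost p.1 p.2) ∂γ)
      ≤ ENNReal.ofReal (c^2) * ENNReal.ofReal (2 * |a|) := by
    rw [hγ, lintegral_add_measure, lintegral_add_measure,
      lintegral_map hFmeas hdiag, lintegral_map hFmeas hTA, lintegral_map hFmeas hTB]
    simp only
    rw [hcost0, zero_add]
    have bA : (∫⁻ θ, ENNReal.ofReal (circleCost θ (θ + c)) ∂μA)
        ≤ ENNReal.ofReal (c^2) * μA univ := by
      calc ∫⁻ θ, ENNReal.ofReal (circleCost θ (θ + c)) ∂μA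
          ≤ ∫⁻ _, ENNReal.ofReal (c^2) ∂μA := lintegral_mono fun θ => hboundA θ
        _ = ENNReal.ofReal (c^2) * μA univ := lintegral_const _
    have bB : (∫⁻ θ, ENNReal.ofReal (circleCost θ (θ + (c - 2*π))) ∂μB)
        ≤ ENNReal.ofReal (c^2) * μB univ := by
      calc ∫⁻ θ, ENNReal.ofReal (circleCost θ (θ + (c - 2*π))) ∂μB
          ≤ ∫⁻ _, ENNReal.ofReal (c^2) ∂μB := lintegral_mono fun θ => hboundB θ
        _ = ENNReal.ofReal (c^2) * μB univ := lintegral_const _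
    have hμAB : μA univ + μB univ = ENNReal.ofReal (2 * |a|) := by
      have := congrArg (fun μ : Measure ℝ => μ univ) hsplit
      simpa [Measure.add_apply, hmass] using this
    calc (∫⁻ θ, ENNReal.ofReal (circleCost θ (θ + c)) ∂μA)
          + ∫⁻ θ, ENNReal.ofReal (circleCost θ (θ + (c - 2*π))) ∂μB
        ≤ ENNReal.ofReal (c^2) * μA univ + ENNReal.ofReal (c^2) * μB univ := add_le_add bA bB
      _ = ENNReal.ofReal (c^2) * (μA univ + μB univ) := (mul_add _ _ _).symm
      _ = ENNReal.ofReal (c^2) * ENNReal.ofReal (2 * |a|) := by rw [hμAB]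
  -- conclude
  have hmem : (∫⁻ p, ENNReal.ofReal (circleCost p.1 p.2) ∂γ) ∈
      {x | ∃ γ' : Measure (ℝ × ℝ), γ'.map Prod.fst = μ₀ ∧ γ'.map Prod.snd = μ₁ ∧
        x = ∫⁻ p, ENNReal.ofReal (circleCost p.1 p.2) ∂γ'} :=
    ⟨γ, hfst, hsnd, rfl⟩
  refine le_trans (sInf_le hmem) (le_trans hcost ?_)
  rw [← ENNReal.ofReal_mul (by positivity)]
  apply ENNReal.ofReal_le_ofReal
  have : c^2 * (2 * |a|) = 2 * π^2 / (k:ℝ)^2 * |a| := by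
    rw [hc]; field_simp
  linarith [this.le, this.ge]
end

section
/- Let μ₀, μ₁ ∈ P(S¹) be probability measures with densities satisfying μ₁ = μ₀ + Σ_{k≥1}(a_k cos(kθ) + b_k sin(kθ)), and suppose ν = μ₀ − Σ_{k≥1}((a_k cos)⁻(kθ) + (b_k sin)⁻(kθ)) is a non-negative measure. Then W₂²(μ₀, μ₁) ≤ Σ_{k≥1} (2π²/k²)(|a_k| + |b_k|). -/
open MeasureTheory Set Real
open scoped ENNReal

namespace W2aux

lemma map_restrict_Ico (u v c : ℝ) :
    (volume.restrict (Ico u v)).map (fun x => x + c) = volume.restrict (Ico (u+c) (v+c)) := by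
  have h := Measure.restrict_map (μ := volume) (measurable_add_const c)
    (measurableSet_Ico (a := u + c) (b := v + c))
  rw [map_add_right_eq_self volume c] at h
  rw [show (fun x => x + c) ⁻¹' Ico (u+c) (v+c) = Ico u v by
    rw [Set.preimage_add_const_Ico]; simp] at h
  exact h.symm

lemma map_withDensity (μ : Measure ℝ) (T : ℝ → ℝ) (hT : Measurable T)
    (g : ℝ → ℝ≥0∞) (hg : Measurable g) :
    (μ.withDensity (fun x => g (T x))).map T = (μ.map T).withDensity g := by
  ext s hs
  rw [Measure.map_apply hT hs, withDensity_apply _ (hT hs), withDensity_apply _ hs,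
    setLIntegral_map hs hg hT]

lemma map_sum_meas {α β : Type*} [MeasurableSpace α] [MeasurableSpace β]
    (μs : ℕ → Measure α) {f : α → β} (hf : Measurable f) :
    (Measure.sum μs).map f = Measure.sum (fun i => (μs i).map f) := by
  ext s hs
  rw [Measure.map_apply hf hs, Measure.sum_apply _ (hf hs), Measure.sum_apply _ hs]
  exact tsum_congr fun i => (Measure.map_apply hf hs).symm

noncomputable def Lm : Measure ℝ := volume.restrict (Ico 0 (2*π))

noncomputable def Mneg (w : ℝ → ℝ) (c : ℝ) (k : ℕ) : Measure ℝ :=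
  Lm.withDensity (fun θ => ENNReal.ofReal (max (-(c * w (k*θ))) 0))

noncomputable def Mpos (w : ℝ → ℝ) (c : ℝ) (k : ℕ) : Measure ℝ :=
  Lm.withDensity (fun θ => ENNReal.ofReal (max (c * w (k*θ)) 0))

noncomputable def couplingW (w : ℝ → ℝ) (c : ℝ) (k : ℕ) : Measure (ℝ×ℝ) :=
  ((Mneg w c k).restrict (Ico 0 (2*π - π/k))).map (fun θ => (θ, θ + π/k))
  + ((Mneg w c k).restrict (Ico (2*π - π/k) (2*π))).map (fun θ => (θ, θ + (π/k - 2*π)))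

lemma shift_nonneg (k : ℕ) : 0 ≤ π/(k:ℝ) := div_nonneg pi_pos.le (Nat.cast_nonneg k)

lemma shift_le_pi (k : ℕ) : π/(k:ℝ) ≤ π := by
  rcases Nat.eq_zero_or_pos k with h | h
  · simp [h, pi_pos.le]
  · exact div_le_self pi_pos.le (by exact_mod_cast h)

lemma Mneg_zero (w : ℝ → ℝ) (k : ℕ) : Mneg w 0 k = 0 := by
  have : (fun θ : ℝ => ENNReal.ofReal (max (-(0 * w (k*θ))) 0)) = fun _ => 0 := by
    funext θ; simp
  rw [Mneg, this]; exact withDensity_zero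

lemma Mpos_zero (w : ℝ → ℝ) (k : ℕ) : Mpos w 0 k = 0 := by
  have : (fun θ : ℝ => ENNReal.ofReal (max (0 * w (k*θ)) 0)) = fun _ => 0 := by
    funext θ; simp
  rw [Mpos, this]; exact withDensity_zero

lemma couplingW_zero (w : ℝ → ℝ) (k : ℕ) : couplingW w 0 k = 0 := by
  rw [couplingW, Mneg_zero]
  simp

lemma Mneg_restrict_base (w : ℝ → ℝ) (c : ℝ) (k : ℕ) :
    (Mneg w c k).restrict (Ico 0 (2*π)) = Mneg w c k := by
  rw [Mneg, Lm, restrict_withDensity measurableSet_Ico,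
    Measure.restrict_restrict measurableSet_Ico, inter_self]

lemma Mneg_univ_eq (w : ℝ → ℝ) (c : ℝ) (k : ℕ) :
    Mneg w c k Set.univ = Mneg w c k (Ico 0 (2*π)) := by
  rw [Mneg, Lm, withDensity_apply _ MeasurableSet.univ,
    withDensity_apply _ measurableSet_Ico, Measure.restrict_univ,
    Measure.restrict_restrict measurableSet_Ico, inter_self]

lemma couplingW_fst (w : ℝ → ℝ) (c : ℝ) (k : ℕ) :
    (couplingW w c k).map Prod.fst = Mneg w c k := by
  have hs0 := shift_nonneg k
  have hsπ := shift_le_pi k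
  have h1 : Measurable fun θ : ℝ => (θ, θ + π/(k:ℝ)) :=
    measurable_id.prodMk (measurable_add_const _)
  have h2 : Measurable fun θ : ℝ => (θ, θ + (π/(k:ℝ) - 2*π)) :=
    measurable_id.prodMk (measurable_add_const _)
  rw [couplingW, Measure.map_add _ _ measurable_fst,
    Measure.map_map measurable_fst h1, Measure.map_map measurable_fst h2]
  have e1 : (Prod.fst ∘ fun θ : ℝ => (θ, θ + π/(k:ℝ))) = id := rfl
  have e2 : (Prod.fst ∘ fun θ : ℝ => (θ, θ + (π/(k:ℝ) - 2*π))) = id := rfl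
  rw [e1, e2, Measure.map_id, Measure.map_id,
    ← Measure.restrict_union (Set.Ico_disjoint_Ico_same) measurableSet_Ico,
    Set.Ico_union_Ico_eq_Ico (by linarith [pi_pos]) (by linarith [pi_pos]),
    Mneg_restrict_base]

lemma couplingW_snd (w : ℝ → ℝ) (c : ℝ) (k : ℕ) (hk : k ≠ 0)
    (hcont : Continuous w) (hanti : Function.Antiperiodic w π) :
    (couplingW w c k).map Prod.snd = Mpos w c k := by
  have hs0 := shift_nonneg k
  have hsπ := shift_le_pi k
  have hkR : (k:ℝ) ≠ 0 := Nat.cast_ne_zero.mpr hk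
  have hkπ : (k:ℝ) * (π/(k:ℝ)) = π := mul_div_cancel₀ π hkR
  have hper : ∀ x : ℝ, w (x + 2*π) = w x := fun x => hanti.periodic_two_mul x
  have hpern : ∀ (n : ℕ) (x : ℝ), w (x + 2*π*n) = w x := by
    intro n
    induction n with
    | zero => simp
    | succ m ih =>
      intro x
      have : x + 2*π*(m+1 : ℕ) = (x + 2*π*m) + 2*π := by push_cast; ring
      rw [this, hper, ih]
  have hg : Measurable (fun θ : ℝ => ENNReal.ofReal (max (c * w (k*θ)) 0)) :=
    ENNReal.measurable_ofReal.comp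
      (((continuous_const.mul (hcont.comp (continuous_const.mul continuous_id))).max
        continuous_const).measurable)
  have h1 : Measurable fun θ : ℝ => (θ, θ + π/(k:ℝ)) :=
    measurable_id.prodMk (measurable_add_const _)
  have h2 : Measurable fun θ : ℝ => (θ, θ + (π/(k:ℝ) - 2*π)) :=
    measurable_id.prodMk (measurable_add_const _)
  -- restricted pieces as withDensity over restricted volume
  have hA : (Mneg w c k).restrict (Ico 0 (2*π - π/k))
      = (volume.restrict (Ico 0 (2*π - π/k))).withDensity
        (fun θ => ENNReal.ofReal (max (-(c * w (k*θ))) 0)) := by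
    rw [Mneg, Lm, restrict_withDensity measurableSet_Ico,
      Measure.restrict_restrict measurableSet_Ico,
      inter_eq_self_of_subset_left (Ico_subset_Ico_right (by linarith [pi_pos]))]
  have hB : (Mneg w c k).restrict (Ico (2*π - π/k) (2*π))
      = (volume.restrict (Ico (2*π - π/k) (2*π))).withDensity
        (fun θ => ENNReal.ofReal (max (-(c * w (k*θ))) 0)) := by
    rw [Mneg, Lm, restrict_withDensity measurableSet_Ico,
      Measure.restrict_restrict measurableSet_Ico,
      inter_eq_self_of_subset_left (Ico_subset_Ico_left (by linarith [pi_pos]))]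
  -- density identities
  have hdA : (fun θ : ℝ => ENNReal.ofReal (max (-(c * w (k*θ))) 0))
      = fun θ : ℝ => ENNReal.ofReal (max (c * w (k*(θ + π/(k:ℝ)))) 0) := by
    funext θ
    have : (k:ℝ) * (θ + π/(k:ℝ)) = (k:ℝ)*θ + π := by rw [mul_add, hkπ]
    rw [this, hanti ((k:ℝ)*θ), mul_neg]
  have hdB : (fun θ : ℝ => ENNReal.ofReal (max (-(c * w (k*θ))) 0))
      = fun θ : ℝ => ENNReal.ofReal (max (c * w (k*(θ + (π/(k:ℝ) - 2*π)))) 0) := by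
    funext θ
    have e : (k:ℝ) * (θ + (π/(k:ℝ) - 2*π)) = ((k:ℝ)*θ + π) + 2*π*(-(k:ℝ)) := by
      rw [mul_add, mul_sub, hkπ]; ring
    have e2 : w ((k:ℝ) * (θ + (π/(k:ℝ) - 2*π))) = w ((k:ℝ)*θ + π) := by
      rw [e]
      have := hpern k (((k:ℝ)*θ + π) + 2*π*(-(k:ℝ)))
      rw [show ((k:ℝ)*θ + π) + 2*π*(-(k:ℝ)) + 2*π*(k:ℕ) = (k:ℝ)*θ + π by push_cast; ring] at this
      exact this.symm
    rw [e2, hanti ((k:ℝ)*θ), mul_neg]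
  -- compute the two mapped pieces
  have pieceA : (((Mneg w c k).restrict (Ico 0 (2*π - π/k))).map (fun θ => (θ, θ + π/(k:ℝ)))).map Prod.snd
      = (volume.restrict (Ico (π/(k:ℝ)) (2*π))).withDensity
        (fun θ => ENNReal.ofReal (max (c * w (k*θ)) 0)) := by
    rw [Measure.map_map measurable_snd h1]
    have : (Prod.snd ∘ fun θ : ℝ => (θ, θ + π/(k:ℝ))) = fun θ : ℝ => θ + π/(k:ℝ) := rfl
    rw [this, hA, hdA,
      map_withDensity _ _ (measurable_add_const _) _ hg,
      map_restrict_Ico]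
    congr 2 <;> ring
  have pieceB : (((Mneg w c k).restrict (Ico (2*π - π/k) (2*π))).map
        (fun θ => (θ, θ + (π/(k:ℝ) - 2*π)))).map Prod.snd
      = (volume.restrict (Ico 0 (π/(k:ℝ)))).withDensity
        (fun θ => ENNReal.ofReal (max (c * w (k*θ)) 0)) := by
    rw [Measure.map_map measurable_snd h2]
    have : (Prod.snd ∘ fun θ : ℝ => (θ, θ + (π/(k:ℝ) - 2*π))) = fun θ : ℝ => θ + (π/(k:ℝ) - 2*π) := rfl
    rw [this, hB, hdB,
      map_withDensity _ _ (measurable_add_const _) _ hg,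
      map_restrict_Ico]
    congr 2 <;> ring
  rw [couplingW, Measure.map_add _ _ measurable_snd, pieceA, pieceB, ← withDensity_add_measure]
  have hU : volume.restrict (Ico (π/(k:ℝ)) (2*π)) + volume.restrict (Ico 0 (π/(k:ℝ))) = Lm := by
    rw [add_comm, ← Measure.restrict_union (Set.Ico_disjoint_Ico_same) measurableSet_Ico,
      Set.Ico_union_Ico_eq_Ico hs0 (by linarith [pi_pos])]
    rfl
  rw [hU, Mpos]

lemma circleCost_measurable : Measurable (fun p : ℝ×ℝ => ENNReal.ofReal (circleCost p.1 p.2)) := by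
  apply ENNReal.measurable_ofReal.comp
  apply Continuous.measurable
  unfold circleCost
  have habs : Continuous (fun p : ℝ×ℝ => |p.1 - p.2|) := (continuous_fst.sub continuous_snd).abs
  exact (habs.min (continuous_const.sub habs)).pow 2

lemma couplingW_cost (w : ℝ → ℝ) (c : ℝ) (k : ℕ) (hk : k ≠ 0) :
    ∫⁻ p, ENNReal.ofReal (circleCost p.1 p.2) ∂(couplingW w c k)
      = ENNReal.ofReal ((π/(k:ℝ))^2) * (Mneg w c k) Set.univ := by
  have hs0 := shift_nonneg k
  have hsπ := shift_le_pi k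
  have h1 : Measurable fun θ : ℝ => (θ, θ + π/(k:ℝ)) :=
    measurable_id.prodMk (measurable_add_const _)
  have h2 : Measurable fun θ : ℝ => (θ, θ + (π/(k:ℝ) - 2*π)) :=
    measurable_id.prodMk (measurable_add_const _)
  have costA : ∀ θ : ℝ, circleCost θ (θ + π/(k:ℝ)) = (π/(k:ℝ))^2 := by
    intro θ
    unfold circleCost
    rw [show θ - (θ + π/(k:ℝ)) = -(π/(k:ℝ)) by ring, abs_neg, abs_of_nonneg hs0,
      min_eq_left (by linarith [pi_pos])]
  have costB : ∀ θ : ℝ, circleCost θ (θ + (π/(k:ℝ) - 2*π)) = (π/(k:ℝ))^2 := by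
    intro θ
    unfold circleCost
    rw [show θ - (θ + (π/(k:ℝ) - 2*π)) = 2*π - π/(k:ℝ) by ring,
      abs_of_nonneg (by linarith [pi_pos]),
      show 2*π - (2*π - π/(k:ℝ)) = π/(k:ℝ) by ring,
      min_eq_right (by linarith [pi_pos])]
  rw [couplingW, lintegral_add_measure,
    lintegral_map circleCost_measurable h1, lintegral_map circleCost_measurable h2]
  simp only [costA, costB]
  rw [lintegral_const, lintegral_const, Measure.restrict_apply_univ, Measure.restrict_apply_univ,
    ← mul_add, Mneg_univ_eq,
    ← measure_union (Set.Ico_disjoint_Ico_same) measurableSet_Ico,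
    Set.Ico_union_Ico_eq_Ico (by linarith [pi_pos]) (by linarith [pi_pos])]

lemma abs_cos_int : ∫ x in (0:ℝ)..π, |Real.cos x| = 2 := by
  have h1 : ∫ x in (0:ℝ)..(π/2), |Real.cos x| = 1 := by
    rw [intervalIntegral.integral_congr (g := Real.cos)
      (fun x hx => by
        rw [Set.uIcc_of_le (by positivity)] at hx
        exact abs_of_nonneg (Real.cos_nonneg_of_mem_Icc ⟨by linarith [hx.1, pi_pos], hx.2⟩))]
    rw [integral_cos]
    simp
  have h2 : ∫ x in (π/2)..π, |Real.cos x| = 1 := by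
    rw [intervalIntegral.integral_congr (g := fun x => -Real.cos x)
      (fun x hx => by
        rw [Set.uIcc_of_le (by linarith [pi_pos])] at hx
        exact abs_of_nonpos (Real.cos_nonpos_of_pi_div_two_le_of_le hx.1 (by linarith [hx.2, pi_pos])))]
    rw [intervalIntegral.integral_neg, integral_cos]
    simp
  have hc : Continuous fun x : ℝ => |Real.cos x| := Real.continuous_cos.abs
  have := intervalIntegral.integral_add_adjacent_intervals
    (a := (0:ℝ)) (b := π/2) (c := π)
    (hc.intervalIntegrable (μ := volume) _ _) (hc.intervalIntegrable (μ := volume) _ _)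
  rw [h1, h2] at this
  linarith [this]

lemma abs_sin_int : ∫ x in (0:ℝ)..π, |Real.sin x| = 2 := by
  rw [intervalIntegral.integral_congr (g := Real.sin)
    (fun x hx => by
      rw [Set.uIcc_of_le pi_pos.le] at hx
      exact abs_of_nonneg (Real.sin_nonneg_of_nonneg_of_le_pi hx.1 hx.2))]
  rw [integral_sin]
  norm_num

lemma wave_mass (w : ℝ → ℝ) (c : ℝ) (k : ℕ) (hk : k ≠ 0)
    (hcont : Continuous w) (hanti : Function.Antiperiodic w π)
    (habs2 : ∫ x in (0:ℝ)..π, |w x| = 2) :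
    (Mneg w c k) Set.univ = ENNReal.ofReal (2 * |c|) := by
  have hkR : (k:ℝ) ≠ 0 := Nat.cast_ne_zero.mpr hk
  have hkpos : (0:ℝ) < (k:ℝ) := by positivity
  -- ∫₀^{2π} w (k x) dx = 0
  have hperw : Function.Periodic w (2*π) := hanti.periodic_two_mul
  have hint : ∀ t₁ t₂, IntervalIntegrable w volume t₁ t₂ := fun t₁ t₂ => hcont.intervalIntegrable _ _
  have hintabs : ∀ t₁ t₂, IntervalIntegrable (fun x => |w x|) volume t₁ t₂ :=
    fun t₁ t₂ => (continuous_abs.comp hcont).intervalIntegrable _ _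
  have hw2pi : ∫ x in (0:ℝ)..(2*π), w x = 0 := by
    have hsplit := intervalIntegral.integral_add_adjacent_intervals
      (a := (0:ℝ)) (b := π) (c := 2*π) (hint 0 π) (hint π (2*π))
    have hshift : ∫ x in π..(2*π), w x = ∫ x in (0:ℝ)..π, w (x + π) := by
      rw [intervalIntegral.integral_comp_add_right]
      norm_num
      ring_nf
    have : ∫ x in (0:ℝ)..π, w (x + π) = - ∫ x in (0:ℝ)..π, w x := by
      rw [← intervalIntegral.integral_neg]
      exact intervalIntegral.integral_congr (fun x _ => hanti x)
    rw [hshift, this] at hsplit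
    linarith [hsplit]
  have hwk0 : ∫ x in (0:ℝ)..(2*π), w ((k:ℝ) * x) = 0 := by
    rw [intervalIntegral.integral_comp_mul_left w hkR]
    have e : (k:ℝ) * (2*π) = 0 + (k:ℤ) • (2*π) := by push_cast [zsmul_eq_mul]; ring
    rw [show (k:ℝ)*0 = 0 by ring, e, hperw.intervalIntegral_add_zsmul_eq (k:ℤ) 0 hint]
    rw [show (0:ℝ) + 2*π = 2*π by ring, hw2pi]
    simp
  -- ∫₀^{2π} |w (k x)| dx = 4
  have habsper : Function.Periodic (fun x => |w x|) π := fun x => by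
    simp only [hanti x, abs_neg]
  have habsk : ∫ x in (0:ℝ)..(2*π), |w ((k:ℝ) * x)| = 4 := by
    rw [intervalIntegral.integral_comp_mul_left (fun x => |w x|) hkR]
    have e : (k:ℝ) * (2*π) = 0 + ((2*k : ℕ) : ℤ) • π := by push_cast [zsmul_eq_mul]; ring
    rw [show (k:ℝ)*0 = 0 by ring, e,
      habsper.intervalIntegral_add_zsmul_eq ((2*k : ℕ) : ℤ) 0 hintabs]
    rw [show (0:ℝ) + π = π by ring, habs2]
    have : (((2*k : ℕ) : ℤ) : ℝ) = 2*(k:ℝ) := by push_cast; ring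
    rw [zsmul_eq_mul, this]
    field_simp
    ring_nf
    rw [mul_inv_cancel₀ hkR, one_mul]
  -- the real integral
  have hreal : ∫ x in (0:ℝ)..(2*π), max (-(c * w ((k:ℝ)*x))) 0 = 2 * |c| := by
    have hrw : ∀ x : ℝ, max (-(c * w ((k:ℝ)*x))) 0
        = (|c| * |w ((k:ℝ)*x)| - c * w ((k:ℝ)*x)) / 2 := by
      intro x
      rw [← abs_mul]
      rcases le_total (c * w ((k:ℝ)*x)) 0 with h | h
      · rw [max_eq_left (by linarith), abs_of_nonpos h]; ring
      · rw [max_eq_right (by linarith), abs_of_nonneg h]; ring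
    rw [intervalIntegral.integral_congr (g := fun x => (|c| * |w ((k:ℝ)*x)| - c * w ((k:ℝ)*x)) / 2)
      (fun x _ => hrw x)]
    have hia : IntervalIntegrable (fun x => |c| * |w ((k:ℝ)*x)|) volume 0 (2*π) :=
      ((continuous_const.mul ((continuous_abs.comp hcont).comp
        (continuous_const.mul continuous_id))).intervalIntegrable _ _)
    have hib : IntervalIntegrable (fun x => c * w ((k:ℝ)*x)) volume 0 (2*π) :=
      ((continuous_const.mul (hcont.comp (continuous_const.mul continuous_id))).intervalIntegrable _ _)
    rw [intervalIntegral.integral_div, intervalIntegral.integral_sub hia hib,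
      intervalIntegral.integral_const_mul, intervalIntegral.integral_const_mul,
      habsk, hwk0]
    ring
  -- convert to the lintegral
  have hgcont : Continuous (fun θ : ℝ => max (-(c * w ((k:ℝ)*θ))) 0) :=
    ((continuous_const.mul (hcont.comp (continuous_const.mul continuous_id))).neg).max continuous_const
  rw [Mneg, Lm, withDensity_apply _ MeasurableSet.univ, Measure.restrict_univ]
  rw [← ofReal_integral_eq_lintegral_ofReal
    ((hgcont.integrableOn_Icc).mono_set Set.Ico_subset_Icc_self)
    (Filter.Eventually.of_forall (fun θ => le_max_right _ _))]
  congr 1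
  rw [MeasureTheory.integral_Ico_eq_integral_Ioo]
  rw [← MeasureTheory.integral_Ioc_eq_integral_Ioo,
    ← intervalIntegral.integral_of_le (by linarith [pi_pos])]
  exact hreal

lemma max_mul_le (x y : ℝ) (hy : |y| ≤ 1) : max (x*y) 0 ≤ |x| :=
  max_le ((le_abs_self _).trans (by rw [abs_mul]; exact mul_le_of_le_one_right (abs_nonneg x) hy))
    (abs_nonneg x)

lemma max_neg_mul_le (x y : ℝ) (hy : |y| ≤ 1) : max (-(x*y)) 0 ≤ |x| := by
  rw [show -(x*y) = x * (-y) by ring]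
  exact max_mul_le x (-y) (by rwa [abs_neg])

lemma max_sub_max (x : ℝ) : max x 0 - max (-x) 0 = x := by
  rcases le_total x 0 with h | h
  · rw [max_eq_right h, max_eq_left (by linarith)]; ring
  · rw [max_eq_left h, max_eq_right (by linarith)]; ring

end W2aux

open W2aux in
theorem W2sq_circle_frequency_sensitivity' (p₀ : ℝ → ℝ) (a b : ℕ → ℝ)
    (ha0 : a 0 = 0) (hb0 : b 0 = 0)
    (hsum : Summable (fun k => |a k| + |b k|))
    (hp₀ : ∀ θ, 0 ≤ p₀ θ)
    (μ₀ μ₁ : Measure ℝ)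
    (hμ₀ : μ₀ = (volume.restrict (Ico 0 (2 * π))).withDensity
      (fun θ => ENNReal.ofReal (p₀ θ)))
    (hμ₁ : μ₁ = (volume.restrict (Ico 0 (2 * π))).withDensity
      (fun θ => ENNReal.ofReal (p₀ θ +
        ∑' k : ℕ, (a k * Real.cos (k * θ) + b k * Real.sin (k * θ)))))
    [IsProbabilityMeasure μ₀] [IsProbabilityMeasure μ₁]
    (hν : ∀ θ, 0 ≤ p₀ θ -
      ∑' k : ℕ, (max (-(a k * Real.cos (k * θ))) 0 + max (-(b k * Real.sin (k * θ))) 0)) :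
    (sInf {c | ∃ γ : Measure (ℝ × ℝ), γ.map Prod.fst = μ₀ ∧ γ.map Prod.snd = μ₁ ∧
      c = ∫⁻ p, ENNReal.ofReal (circleCost p.1 p.2) ∂γ} : ℝ≥0∞) ≤
      ENNReal.ofReal (∑' k : ℕ, 2 * π ^ 2 / (k : ℝ) ^ 2 * (|a k| + |b k|)) := by
  classical
  -- measurability of the densities
  have mA : ∀ k : ℕ, Measurable fun θ : ℝ => ENNReal.ofReal (max (-(a k * Real.cos (k*θ))) 0) :=
    fun k => ENNReal.measurable_ofReal.comp
      (((continuous_const.mul (Real.continuous_cos.comp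
        (continuous_const.mul continuous_id))).neg.max continuous_const).measurable)
  have mB : ∀ k : ℕ, Measurable fun θ : ℝ => ENNReal.ofReal (max (-(b k * Real.sin (k*θ))) 0) :=
    fun k => ENNReal.measurable_ofReal.comp
      (((continuous_const.mul (Real.continuous_sin.comp
        (continuous_const.mul continuous_id))).neg.max continuous_const).measurable)
  have mPA : ∀ k : ℕ, Measurable fun θ : ℝ => ENNReal.ofReal (max (a k * Real.cos (k*θ)) 0) :=
    fun k => ENNReal.measurable_ofReal.comp
      (((continuous_const.mul (Real.continuous_cos.comp
        (continuous_const.mul continuous_id))).max continuous_const).measurable)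
  have mPB : ∀ k : ℕ, Measurable fun θ : ℝ => ENNReal.ofReal (max (b k * Real.sin (k*θ)) 0) :=
    fun k => ENNReal.measurable_ofReal.comp
      (((continuous_const.mul (Real.continuous_sin.comp
        (continuous_const.mul continuous_id))).max continuous_const).measurable)
  -- pointwise bounds and summability
  have hbA : ∀ k (θ : ℝ), max (-(a k * Real.cos (k*θ))) 0 ≤ |a k| :=
    fun k θ => max_neg_mul_le _ _ (Real.abs_cos_le_one _)
  have hbB : ∀ k (θ : ℝ), max (-(b k * Real.sin (k*θ))) 0 ≤ |b k| :=
    fun k θ => max_neg_mul_le _ _ (Real.abs_sin_le_one _)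
  have hbPA : ∀ k (θ : ℝ), max (a k * Real.cos (k*θ)) 0 ≤ |a k| :=
    fun k θ => max_mul_le _ _ (Real.abs_cos_le_one _)
  have hbPB : ∀ k (θ : ℝ), max (b k * Real.sin (k*θ)) 0 ≤ |b k| :=
    fun k θ => max_mul_le _ _ (Real.abs_sin_le_one _)
  have nnA : ∀ k (θ : ℝ), 0 ≤ max (-(a k * Real.cos (k*θ))) 0 := fun k θ => le_max_right _ _
  have nnB : ∀ k (θ : ℝ), 0 ≤ max (-(b k * Real.sin (k*θ))) 0 := fun k θ => le_max_right _ _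
  have nnPA : ∀ k (θ : ℝ), 0 ≤ max (a k * Real.cos (k*θ)) 0 := fun k θ => le_max_right _ _
  have nnPB : ∀ k (θ : ℝ), 0 ≤ max (b k * Real.sin (k*θ)) 0 := fun k θ => le_max_right _ _
  have hSsum : ∀ θ : ℝ, Summable (fun k =>
      max (-(a k * Real.cos (k*θ))) 0 + max (-(b k * Real.sin (k*θ))) 0) := fun θ =>
    Summable.of_nonneg_of_le (fun k => by positivity)
      (fun k => add_le_add (hbA k θ) (hbB k θ)) hsum
  have hPsum : ∀ θ : ℝ, Summable (fun k =>
      max (a k * Real.cos (k*θ)) 0 + max (b k * Real.sin (k*θ)) 0) := fun θ =>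
    Summable.of_nonneg_of_le (fun k => by positivity)
      (fun k => add_le_add (hbPA k θ) (hbPB k θ)) hsum
  -- abbreviations
  set S : ℝ → ℝ := fun θ => ∑' k : ℕ,
    (max (-(a k * Real.cos (k*θ))) 0 + max (-(b k * Real.sin (k*θ))) 0) with hSdef
  set P : ℝ → ℝ := fun θ => ∑' k : ℕ,
    (max (a k * Real.cos (k*θ)) 0 + max (b k * Real.sin (k*θ)) 0) with hPdef
  have hS0 : ∀ θ, 0 ≤ S θ := fun θ => tsum_nonneg (fun k => by positivity)
  have hP0 : ∀ θ, 0 ≤ P θ := fun θ => tsum_nonneg (fun k => by positivity)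
  have hTeq : ∀ θ : ℝ, (∑' k : ℕ, (a k * Real.cos (k*θ) + b k * Real.sin (k*θ))) = P θ - S θ := by
    intro θ
    rw [hPdef, hSdef, ← Summable.tsum_sub (hPsum θ) (hSsum θ)]
    exact tsum_congr fun k => by
      have h1 := max_sub_max (a k * Real.cos (k*θ))
      have h2 := max_sub_max (b k * Real.sin (k*θ))
      ring_nf
      linarith [h1, h2]
  -- the "negative part" and "positive part" measures
  set MS : Measure ℝ := Lm.withDensity (fun θ => ∑' k : ℕ,
    (ENNReal.ofReal (max (-(a k * Real.cos (k*θ))) 0)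
      + ENNReal.ofReal (max (-(b k * Real.sin (k*θ))) 0))) with hMSdef
  set MP : Measure ℝ := Lm.withDensity (fun θ => ∑' k : ℕ,
    (ENNReal.ofReal (max (a k * Real.cos (k*θ)) 0)
      + ENNReal.ofReal (max (b k * Real.sin (k*θ)) 0))) with hMPdef
  have hDS : ∀ θ : ℝ, (∑' k : ℕ,
      (ENNReal.ofReal (max (-(a k * Real.cos (k*θ))) 0)
        + ENNReal.ofReal (max (-(b k * Real.sin (k*θ))) 0))) = ENNReal.ofReal (S θ) := by
    intro θ
    rw [hSdef, ENNReal.ofReal_tsum_of_nonneg (fun k => by positivity) (hSsum θ)]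
    exact tsum_congr fun k => (ENNReal.ofReal_add (nnA k θ) (nnB k θ)).symm
  have hDP : ∀ θ : ℝ, (∑' k : ℕ,
      (ENNReal.ofReal (max (a k * Real.cos (k*θ)) 0)
        + ENNReal.ofReal (max (b k * Real.sin (k*θ)) 0))) = ENNReal.ofReal (P θ) := by
    intro θ
    rw [hPdef, ENNReal.ofReal_tsum_of_nonneg (fun k => by positivity) (hPsum θ)]
    exact tsum_congr fun k => (ENNReal.ofReal_add (nnPA k θ) (nnPB k θ)).symm
  have hMSsum : Measure.sum (fun k : ℕ => Mneg Real.cos (a k) k + Mneg Real.sin (b k) k) = MS := by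
    rw [hMSdef]
    have := withDensity_tsum (μ := Lm) (f := fun k : ℕ => fun θ : ℝ =>
      ENNReal.ofReal (max (-(a k * Real.cos (k*θ))) 0)
        + ENNReal.ofReal (max (-(b k * Real.sin (k*θ))) 0))
      (fun k => (mA k).add (mB k))
    rw [show (fun θ : ℝ => ∑' k : ℕ,
        (ENNReal.ofReal (max (-(a k * Real.cos (k*θ))) 0)
          + ENNReal.ofReal (max (-(b k * Real.sin (k*θ))) 0)))
        = ∑' k : ℕ, (fun θ : ℝ => ENNReal.ofReal (max (-(a k * Real.cos (k*θ))) 0)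
          + ENNReal.ofReal (max (-(b k * Real.sin (k*θ))) 0)) by
      funext θ
      exact (tsum_apply (f := fun k : ℕ => fun θ : ℝ =>
        ENNReal.ofReal (max (-(a k * Real.cos (k*θ))) 0)
          + ENNReal.ofReal (max (-(b k * Real.sin (k*θ))) 0))
        (Pi.summable.mpr fun _ => ENNReal.summable)).symm]
    rw [this]
    congr 1
    funext k
    exact (withDensity_add_left (mA k)
      (fun θ : ℝ => ENNReal.ofReal (max (-(b k * Real.sin (k*θ))) 0))).symm
  have hMPsum : Measure.sum (fun k : ℕ => Mpos Real.cos (a k) k + Mpos Real.sin (b k) k) = MP := by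
    rw [hMPdef]
    have := withDensity_tsum (μ := Lm) (f := fun k : ℕ => fun θ : ℝ =>
      ENNReal.ofReal (max (a k * Real.cos (k*θ)) 0)
        + ENNReal.ofReal (max (b k * Real.sin (k*θ)) 0))
      (fun k => (mPA k).add (mPB k))
    rw [show (fun θ : ℝ => ∑' k : ℕ,
        (ENNReal.ofReal (max (a k * Real.cos (k*θ)) 0)
          + ENNReal.ofReal (max (b k * Real.sin (k*θ)) 0)))
        = ∑' k : ℕ, (fun θ : ℝ => ENNReal.ofReal (max (a k * Real.cos (k*θ)) 0)
          + ENNReal.ofReal (max (b k * Real.sin (k*θ)) 0)) by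
      funext θ
      exact (tsum_apply (f := fun k : ℕ => fun θ : ℝ =>
        ENNReal.ofReal (max (a k * Real.cos (k*θ)) 0)
          + ENNReal.ofReal (max (b k * Real.sin (k*θ)) 0))
        (Pi.summable.mpr fun _ => ENNReal.summable)).symm]
    rw [this]
    congr 1
    funext k
    exact (withDensity_add_left (mPA k)
      (fun θ : ℝ => ENNReal.ofReal (max (b k * Real.sin (k*θ)) 0))).symm
  have hMSle : MS ≤ μ₀ := by
    rw [Measure.le_iff]
    intro s hs
    rw [hMSdef, hμ₀, withDensity_apply _ hs, withDensity_apply _ hs]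
    exact lintegral_mono fun θ => by
      rw [hDS θ]
      exact ENNReal.ofReal_le_ofReal (by linarith [hν θ])
  haveI hMSfin : IsFiniteMeasure MS := isFiniteMeasure_of_le μ₀ hMSle
  set ν' : Measure ℝ := μ₀ - MS with hν'def
  have hν'add : ν' + MS = μ₀ := Measure.sub_add_cancel_of_le hMSle
  set γ : Measure (ℝ × ℝ) := ν'.map (fun θ => (θ, θ)) +
    Measure.sum (fun k : ℕ => couplingW Real.cos (a k) k + couplingW Real.sin (b k) k) with hγdef
  have hdiag : Measurable fun θ : ℝ => (θ, θ) := measurable_id.prodMk measurable_id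
  -- first marginal
  have h_fst : γ.map Prod.fst = μ₀ := by
    rw [hγdef, Measure.map_add _ _ measurable_fst, map_sum_meas _ measurable_fst,
      Measure.map_map measurable_fst hdiag]
    have e1 : (Prod.fst ∘ fun θ : ℝ => (θ, θ)) = id := rfl
    rw [e1, Measure.map_id]
    have e2 : (fun k : ℕ => (couplingW Real.cos (a k) k + couplingW Real.sin (b k) k).map Prod.fst)
        = fun k : ℕ => Mneg Real.cos (a k) k + Mneg Real.sin (b k) k := by
      funext k
      rw [Measure.map_add _ _ measurable_fst, couplingW_fst, couplingW_fst]
    rw [e2, hMSsum, hν'add]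
  -- second marginal
  have h_snd : γ.map Prod.snd = μ₁ := by
    rw [hγdef, Measure.map_add _ _ measurable_snd, map_sum_meas _ measurable_snd,
      Measure.map_map measurable_snd hdiag]
    have e1 : (Prod.snd ∘ fun θ : ℝ => (θ, θ)) = id := rfl
    rw [e1, Measure.map_id]
    have e2 : (fun k : ℕ => (couplingW Real.cos (a k) k + couplingW Real.sin (b k) k).map Prod.snd)
        = fun k : ℕ => Mpos Real.cos (a k) k + Mpos Real.sin (b k) k := by
      funext k
      rcases Nat.eq_zero_or_pos k with rfl | hk
      · rw [ha0, hb0, couplingW_zero, couplingW_zero, Mpos_zero, Mpos_zero,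
          add_zero, add_zero, Measure.map_zero]
      · rw [Measure.map_add _ _ measurable_snd,
          couplingW_snd _ _ _ (Nat.pos_iff_ne_zero.mp hk) Real.continuous_cos Real.cos_antiperiodic,
          couplingW_snd _ _ _ (Nat.pos_iff_ne_zero.mp hk) Real.continuous_sin Real.sin_antiperiodic]
    rw [e2, hMPsum]
    -- now show ν' + MP = μ₁
    ext s hs
    have hMSs_le : MS s ≤ μ₀ s := Measure.le_iff'.mp hMSle s
    have hMSs_fin : MS s ≠ ∞ := measure_ne_top MS s
    have hstar : MP s + μ₀ s = MS s + μ₁ s := by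
      have hμ₀s : μ₀ s = ∫⁻ θ in s, ENNReal.ofReal (p₀ θ) ∂Lm := by
        rw [hμ₀, withDensity_apply _ hs]; rfl
      have hμ₁s : μ₁ s = ∫⁻ θ in s, ENNReal.ofReal (p₀ θ +
          ∑' k : ℕ, (a k * Real.cos (k*θ) + b k * Real.sin (k*θ))) ∂Lm := by
        rw [hμ₁, withDensity_apply _ hs]; rfl
      have hMPs : MP s = ∫⁻ θ in s, ENNReal.ofReal (P θ) ∂Lm := by
        rw [hMPdef, withDensity_apply _ hs]
        exact lintegral_congr fun θ => hDP θ
      have hMSs : MS s = ∫⁻ θ in s, ENNReal.ofReal (S θ) ∂Lm := by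
        rw [hMSdef, withDensity_apply _ hs]
        exact lintegral_congr fun θ => hDS θ
      have hPmeas : Measurable fun θ : ℝ => ENNReal.ofReal (P θ) := by
        rw [show (fun θ : ℝ => ENNReal.ofReal (P θ)) = fun θ => ∑' k : ℕ,
          (ENNReal.ofReal (max (a k * Real.cos (k*θ)) 0)
            + ENNReal.ofReal (max (b k * Real.sin (k*θ)) 0)) from funext fun θ => (hDP θ).symm]
        exact Measurable.ennreal_tsum fun k => (mPA k).add (mPB k)
      have hSmeas : Measurable fun θ : ℝ => ENNReal.ofReal (S θ) := by
        rw [show (fun θ : ℝ => ENNReal.ofReal (S θ)) = fun θ => ∑' k : ℕ,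
          (ENNReal.ofReal (max (-(a k * Real.cos (k*θ))) 0)
            + ENNReal.ofReal (max (-(b k * Real.sin (k*θ))) 0)) from funext fun θ => (hDS θ).symm]
        exact Measurable.ennreal_tsum fun k => (mA k).add (mB k)
      rw [hμ₀s, hμ₁s, hMPs, hMSs, ← lintegral_add_left' (hPmeas.aemeasurable.restrict) _,
        ← lintegral_add_left' (hSmeas.aemeasurable.restrict) _]
      
      refine lintegral_congr fun θ => ?_
      rw [← ENNReal.ofReal_add (hP0 θ) (hp₀ θ), ← ENNReal.ofReal_add (hS0 θ)
        (by linarith [hν θ, hP0 θ, hTeq θ])]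
      congr 1
      have := hTeq θ
      linarith [this]
    have goal_eq : (ν' + MP) s = ν' s + MP s := Measure.add_apply _ _ _
    rw [goal_eq, hν'def, Measure.sub_apply hs hMSle]
    have h1 : μ₀ s - MS s + MP s + MS s = μ₁ s + MS s := by
      rw [add_right_comm, tsub_add_cancel_of_le hMSs_le, add_comm (μ₀ s) (MP s), hstar,
        add_comm (MS s) (μ₁ s)]
    exact ENNReal.add_left_inj hMSs_fin |>.mp h1
  -- cost of the coupling
  have hsum2 : Summable (fun k : ℕ => 2 * π ^ 2 / (k : ℝ) ^ 2 * (|a k| + |b k|)) := by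
    apply Summable.of_nonneg_of_le (fun k => by positivity) (fun k => ?_)
      (hsum.mul_left (2 * π ^ 2))
    rcases Nat.eq_zero_or_pos k with rfl | hk
    · simp only [Nat.cast_zero]
      norm_num
      positivity
    · have hk1 : (1:ℝ) ≤ (k:ℝ) := by exact_mod_cast hk
      have h2 : (1:ℝ) ≤ (k:ℝ)^2 := by nlinarith
      exact mul_le_mul_of_nonneg_right (div_le_self (by positivity) h2) (by positivity)
  have h_cost : ∫⁻ p, ENNReal.ofReal (circleCost p.1 p.2) ∂γ
      = ENNReal.ofReal (∑' k : ℕ, 2 * π ^ 2 / (k : ℝ) ^ 2 * (|a k| + |b k|)) := by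
    have hzero : ∫⁻ p, ENNReal.ofReal (circleCost p.1 p.2) ∂(ν'.map (fun θ => (θ, θ))) = 0 := by
      rw [lintegral_map circleCost_measurable hdiag]
      have : (fun θ : ℝ => ENNReal.ofReal (circleCost θ θ)) = fun _ => 0 := by
        funext θ
        unfold circleCost
        rw [sub_self, abs_zero, min_eq_left (by linarith [pi_pos])]
        norm_num
      rw [this, lintegral_zero]
    have hk_cost : ∀ k : ℕ, (∫⁻ p, ENNReal.ofReal (circleCost p.1 p.2)
          ∂(couplingW Real.cos (a k) k + couplingW Real.sin (b k) k))
        = ENNReal.ofReal (2 * π ^ 2 / (k : ℝ) ^ 2 * (|a k| + |b k|)) := by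
      intro k
      rcases Nat.eq_zero_or_pos k with rfl | hk
      · rw [ha0, hb0, couplingW_zero, couplingW_zero, add_zero, lintegral_zero_measure]
        simp [ha0, hb0]
      · have hk' := Nat.pos_iff_ne_zero.mp hk
        have hkR : (k:ℝ) ≠ 0 := Nat.cast_ne_zero.mpr hk'
        rw [lintegral_add_measure, couplingW_cost _ _ _ hk', couplingW_cost _ _ _ hk',
          wave_mass _ _ _ hk' Real.continuous_cos Real.cos_antiperiodic abs_cos_int,
          wave_mass _ _ _ hk' Real.continuous_sin Real.sin_antiperiodic abs_sin_int,
          ← ENNReal.ofReal_mul (by positivity), ← ENNReal.ofReal_mul (by positivity),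
          ← ENNReal.ofReal_add (by positivity) (by positivity)]
        congr 1
        field_simp
    rw [hγdef, lintegral_add_measure, hzero, zero_add, lintegral_sum_measure,
      tsum_congr hk_cost]
    exact (ENNReal.ofReal_tsum_of_nonneg (fun k => by positivity) hsum2).symm
  exact sInf_le ⟨γ, h_fst, h_snd, h_cost.symm⟩

/-- Frequency-sensitivity of `W₂` on the circle: if `μ₁ = μ₀ + Σ_{k≥1}(a_k cos kθ + b_k sin kθ)`
and `ν = μ₀ − Σ_{k≥1}((a_k cos)⁻ + (b_k sin)⁻)` is non-negative, then
`W₂²(μ₀, μ₁) ≤ Σ_{k≥1} (2π²/k²)(|a_k| + |b_k|)`. -/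
theorem W2sq_circle_frequency_sensitivity (p₀ : ℝ → ℝ) (a b : ℕ → ℝ)
    (ha0 : a 0 = 0) (hb0 : b 0 = 0)
    (hsum : Summable (fun k => |a k| + |b k|))
    (hp₀ : ∀ θ, 0 ≤ p₀ θ)
    (μ₀ μ₁ : Measure ℝ)
    (hμ₀ : μ₀ = (volume.restrict (Ico 0 (2 * π))).withDensity
      (fun θ => ENNReal.ofReal (p₀ θ)))
    (hμ₁ : μ₁ = (volume.restrict (Ico 0 (2 * π))).withDensity
      (fun θ => ENNReal.ofReal (p₀ θ +
        ∑' k : ℕ, (a k * Real.cos (k * θ) + b k * Real.sin (k * θ)))))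
    [IsProbabilityMeasure μ₀] [IsProbabilityMeasure μ₁]
    (hν : ∀ θ, 0 ≤ p₀ θ -
      ∑' k : ℕ, (max (-(a k * Real.cos (k * θ))) 0 + max (-(b k * Real.sin (k * θ))) 0)) :
    W2sqCircle μ₀ μ₁ ≤
      ENNReal.ofReal (∑' k : ℕ, 2 * π ^ 2 / (k : ℝ) ^ 2 * (|a k| + |b k|)) := by
  unfold W2sqCircle
  exact W2sq_circle_frequency_sensitivity' p₀ a b ha0 hb0 hsum hp₀ μ₀ μ₁ hμ₀ hμ₁ hν
end

section
/- Let u : [0,T] → ℝ be continuous and let D_β(u)(t) = f_β(u(t)) / (∫₀^T f_β(u(s)) ds / T) be the normalized softplus encoding with f_β(x) = (1/β) log(1+e^{βx}), β > 0. If ∫₀^T max(u(s),0) ds > 0, then as β → +∞, D_β(u) converges uniformly on [0,T] to u⁺ / (∫₀^T u⁺ ds / T), the normalized positive part of u. -/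
open Set intervalIntegral

lemma softplus_lb (β x : ℝ) (hβ : 0 < β) :
    max x 0 ≤ (1 / β) * Real.log (1 + Real.exp (β * x)) := by
  rw [one_div, inv_mul_eq_div, le_div_iff₀ hβ, mul_comm,
    mul_max_of_nonneg _ _ hβ.le, mul_zero]
  rcases le_total (β * x) 0 with h | h
  · rw [max_eq_right h]
    exact Real.log_nonneg (by nlinarith [Real.exp_pos (β * x)])
  · rw [max_eq_left h]
    calc β * x = Real.log (Real.exp (β * x)) := (Real.log_exp _).symm
    _ ≤ Real.log (1 + Real.exp (β * x)) :=
        Real.log_le_log (Real.exp_pos _) (by linarith)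

lemma softplus_ub (β x : ℝ) (hβ : 0 < β) :
    (1 / β) * Real.log (1 + Real.exp (β * x)) ≤ max x 0 + Real.log 2 / β := by
  have h1 : (0:ℝ) < 1 + Real.exp (β * x) := by positivity
  have h2 : 1 + Real.exp (β * x) ≤ 2 * Real.exp (max (β * x) 0) := by
    have e1 : Real.exp (β * x) ≤ Real.exp (max (β * x) 0) :=
      Real.exp_le_exp.2 (le_max_left _ _)
    have e2 : (1:ℝ) ≤ Real.exp (max (β * x) 0) :=
      Real.one_le_exp (le_max_right _ _)
    linarith
  have h3 : Real.log (1 + Real.exp (β * x)) ≤ Real.log 2 + max (β * x) 0 := by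
    calc Real.log (1 + Real.exp (β * x)) ≤ Real.log (2 * Real.exp (max (β * x) 0)) :=
        Real.log_le_log h1 h2
    _ = Real.log 2 + max (β * x) 0 := by
        rw [Real.log_mul (by norm_num) (Real.exp_ne_zero _), Real.log_exp]
  have hmax : max (β * x) 0 = β * max x 0 := by
    rw [mul_max_of_nonneg _ _ hβ.le, mul_zero]
  rw [hmax] at h3
  rw [one_div, inv_mul_eq_div, div_le_iff₀ hβ]
  have hq : (max x 0 + Real.log 2 / β) * β = β * max x 0 + Real.log 2 := by
    field_simp
  linarith

/-- If `u` is continuous on `[0,T]` and its positive part has positive integral, then the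
normalized softplus encoding `D_β(u)(t) = f_β(u(t)) / (⟨f_β ∘ u⟩)` converges uniformly on
`[0,T]` to the normalized positive part `u⁺ / ⟨u⁺⟩` as `β → +∞`. -/
theorem softplus_encoding_tendstoUniformly (T : ℝ) (hT : 0 < T) (u : ℝ → ℝ)
    (hu : ContinuousOn u (Icc 0 T))
    (hpos : 0 < ∫ s in (0 : ℝ)..T, max (u s) 0) :
    ∀ ε > (0 : ℝ), ∃ B > (0 : ℝ), ∀ β > B, ∀ t ∈ Icc (0 : ℝ) T,
      |((1 / β) * Real.log (1 + Real.exp (β * u t))) /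
          ((∫ s in (0 : ℝ)..T, (1 / β) * Real.log (1 + Real.exp (β * u s))) / T) -
        (max (u t) 0) / ((∫ s in (0 : ℝ)..T, max (u s) 0) / T)| < ε := by
  intro ε hε
  set c := Real.log 2 with hc_def
  have hc : 0 < c := Real.log_pos (by norm_num)
  obtain ⟨M, hM⟩ := isCompact_Icc.exists_bound_of_continuousOn hu
  have hM0 : 0 ≤ M := le_trans (abs_nonneg _) (hM 0 ⟨le_refl 0, hT.le⟩)
  set I := ∫ s in (0:ℝ)..T, max (u s) 0 with hI_def
  have hI : 0 < I := hpos
  set K := T * (c * I + M * T * c) / I ^ 2 with hK_def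
  have hK : 0 ≤ K := by positivity
  refine ⟨max 1 (K / ε), lt_of_lt_of_le one_pos (le_max_left _ _), ?_⟩
  intro β hβ t ht
  have hβ0 : (0:ℝ) < β := lt_trans one_pos (lt_of_le_of_lt (le_max_left _ _) hβ)
  -- continuity / integrability
  have hg : Continuous (fun x : ℝ => (1 / β) * Real.log (1 + Real.exp (β * x))) := by
    apply continuous_const.mul
    apply Continuous.log
    · exact continuous_const.add (Real.continuous_exp.comp (continuous_const.mul continuous_id))
    · intro x
      have := Real.exp_pos (β * x)
      positivity
  have hucont : ContinuousOn (fun s => max (u s) 0) (Icc 0 T) := (continuous_id.max continuous_const).comp_continuousOn hu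
  have hfcont : ContinuousOn (fun s => (1 / β) * Real.log (1 + Real.exp (β * u s)))
      (Icc 0 T) := hg.comp_continuousOn hu
  have hint1 : IntervalIntegrable (fun s => max (u s) 0) MeasureTheory.volume 0 T := by
    apply ContinuousOn.intervalIntegrable
    rwa [uIcc_of_le hT.le]
  have hint2 : IntervalIntegrable (fun s => (1 / β) * Real.log (1 + Real.exp (β * u s)))
      MeasureTheory.volume 0 T := by
    apply ContinuousOn.intervalIntegrable
    rwa [uIcc_of_le hT.le]
  have hint3 : IntervalIntegrable (fun s => max (u s) 0 + c / β) MeasureTheory.volume 0 T :=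
    hint1.add intervalIntegrable_const
  set A := ∫ s in (0:ℝ)..T, (1 / β) * Real.log (1 + Real.exp (β * u s)) with hA_def
  have hIA : I ≤ A := by
    apply intervalIntegral.integral_mono_on hT.le hint1 hint2
    intro s _
    exact softplus_lb β (u s) hβ0
  have hAub : A ≤ I + T * (c / β) := by
    have h1 : A ≤ ∫ s in (0:ℝ)..T, (max (u s) 0 + c / β) := by
      apply intervalIntegral.integral_mono_on hT.le hint2 hint3
      intro s _
      exact softplus_ub β (u s) hβ0
    have h2 : (∫ s in (0:ℝ)..T, (max (u s) 0 + c / β)) = I + T * (c / β) := by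
      rw [intervalIntegral.integral_add hint1 intervalIntegrable_const,
        intervalIntegral.integral_const]
      simp [smul_eq_mul]
      rfl
    linarith
  have hA0 : 0 < A := lt_of_lt_of_le hI hIA
  set a := (1 / β) * Real.log (1 + Real.exp (β * u t)) with ha_def
  set b := max (u t) 0 with hb_def
  have hab1 : b ≤ a := softplus_lb β (u t) hβ0
  have hab2 : a ≤ b + c / β := softplus_ub β (u t) hβ0
  have hbM : |b| ≤ M := by
    have h1 := hM t ht
    rw [Real.norm_eq_abs] at h1
    have : b ≤ |u t| := le_trans (max_le_max (le_abs_self _) le_rfl) (by simp)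
    have hb0 : 0 ≤ b := le_max_right _ _
    rw [abs_of_nonneg hb0]
    linarith
  -- the key algebraic identity
  have hexpand : a / (A / T) - b / (I / T) = T * ((a - b) * I + b * (I - A)) / (A * I) := by
    field_simp
    ring
  rw [hexpand]
  have hnum : |(a - b) * I + b * (I - A)| ≤ (c * I + M * T * c) / β := by
    have e1 : |(a - b) * I| ≤ (c / β) * I := by
      rw [abs_mul, abs_of_pos hI]
      apply mul_le_mul_of_nonneg_right _ hI.le
      rw [abs_of_nonneg (by linarith)]
      linarith
    have e2 : |b * (I - A)| ≤ M * (T * (c / β)) := by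
      rw [abs_mul]
      apply mul_le_mul hbM _ (abs_nonneg _) hM0
      rw [abs_of_nonpos (by linarith)]
      linarith
    calc |(a - b) * I + b * (I - A)| ≤ |(a - b) * I| + |b * (I - A)| := abs_add_le _ _
    _ ≤ (c / β) * I + M * (T * (c / β)) := add_le_add e1 e2
    _ = (c * I + M * T * c) / β := by field_simp
  have hbound : |T * ((a - b) * I + b * (I - A)) / (A * I)| ≤ K / β := by
    rw [abs_div, abs_mul, abs_of_pos hT, abs_of_pos (mul_pos hA0 hI)]
    calc T * |(a - b) * I + b * (I - A)| / (A * I)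
        ≤ T * ((c * I + M * T * c) / β) / (I * I) := by
          gcongr
    _ = K / β := by rw [hK_def]; field_simp
  have hfinal : K / β < ε := by
    rw [div_lt_iff₀ hβ0]
    have h1 : K / ε < β := lt_of_le_of_lt (le_max_right 1 (K / ε)) hβ
    have h2 : K = ε * (K / ε) := by field_simp
    calc K = ε * (K / ε) := h2
    _ < ε * β := by exact mul_lt_mul_of_pos_left h1 hε
  exact lt_of_le_of_lt hbound hfinal
end
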